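/- arXiv:1306.2622 — 4 statements merged into one kernel-verified Lean document; each statement's English description precedes it below -/
import Mathlib

section
/- Let G be a finite group and H ≤ G a subgroup with H ≠ {1}, H ≠ G, and H ∩ gHg⁻¹ = {1} for every g ∈ G∖H (for instance, H a Frobenius complement in a Frobenius group G). Let k := |H\G/H| − 1 be one less than the number of (H,H)-double cosets in G. Then for all automorphisms α, β of H there is an isomorphism of (G,G)-bisets ((G×G)/Δ(H,α,H)) ×_G ((G×G)/Δ(H,β,H)) ≅ ((G×G)/Δ(H,αβ,H)) ⊔ (k copies of (G×G)/Δ({1},id,{1})), where (G×G)/Δ({1},id,{1}) is just G×G with the left translation (G×G)-action. -/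
open MulAction

/-- An isomorphism of `M`-sets: an equivariant bijection. -/
def IsoAsGSets (M X Y : Type*) [SMul M X] [SMul M Y] : Prop :=
  ∃ e : X ≃ Y, ∀ (m : M) (x : X), e (m • x) = m • e x

/-- The twisted diagonal subgroup `Δ(R,α,S) = {(α s, s) | s ∈ S}` of `G × H`,
for an isomorphism `α : S ≃* R`. -/
def twistedDiagonal {G H : Type*} [Group G] [Group H] (R : Subgroup G) (S : Subgroup H)
    (α : S ≃* R) : Subgroup (G × H) :=
  ((R.subtype.comp α.toMonoidHom).prod S.subtype).range

/-- `Δ(G,φ,H) = {(φ h, h) | h ∈ H} ≤ G × H` for an isomorphism `φ : H ≃* G`. -/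
def fullTwistedDiagonal {G H : Type*} [Group G] [Group H] (φ : H ≃* G) : Subgroup (G × H) :=
  (φ.toMonoidHom.prod (MonoidHom.id H)).range

/-- The diagonal subgroup `Δ(R) = {(r,r) | r ∈ R} ≤ G × G`. -/
def diagSubgroup {G : Type*} [Group G] (R : Subgroup G) : Subgroup (G × G) :=
  (R.subtype.prod R.subtype).range

/-- A `(G,H)`-biset (i.e. a left `(G × H)`-set) is bifree if it is free as a left `G`-set
and free as a right `H`-set. -/
def IsBifree (G H X : Type*) [Group G] [Group H] [MulAction (G × H) X] : Prop :=
  (∀ (g : G) (x : X), (g, (1 : H)) • x = x → g = 1) ∧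
  (∀ (h : H) (x : X), ((1 : G), h) • x = x → h = 1)

section Tensor

variable (G H K : Type*) [Group G] [Group H] [Group K]
variable (X Y : Type*) [MulAction (G × H) X] [MulAction (H × K) Y]

/-- The relation on `X × Y` identifying `(x·h, y)` with `(x, h·y)`. -/
def bisetSetoid : Setoid (X × Y) where
  r p q := ∃ h : H, q.1 = ((1 : G), h) • p.1 ∧ q.2 = (h, (1 : K)) • p.2
  iseqv := by
    constructor
    · intro p
      exact ⟨1, by simp [Prod.mk_one_one], by simp [Prod.mk_one_one]⟩
    · rintro p q ⟨h, h1, h2⟩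
      exact ⟨h⁻¹, by simp [h1, smul_smul, Prod.mk_one_one], by simp [h2, smul_smul, Prod.mk_one_one]⟩
    · rintro p q r ⟨h, h1, h2⟩ ⟨h', h1', h2'⟩
      exact ⟨h' * h, by simp [h1, h1', smul_smul], by simp [h2, h2', smul_smul]⟩

/-- The tensor product `X ×_H Y` of a `(G,H)`-biset and an `(H,K)`-biset;
a `(G,K)`-biset. -/
def BisetTensor : Type _ :=
  Quotient (bisetSetoid G H K X Y)

variable {G H K X Y}

/-- The class of `(x, y)` in `X ×_H Y`. -/
def BisetTensor.mk (p : X × Y) : BisetTensor G H K X Y :=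
  Quotient.mk (bisetSetoid G H K X Y) p

variable (G H K X Y)

instance : SMul (G × K) (BisetTensor G H K X Y) :=
  ⟨fun a => Quotient.map (fun p => ((a.1, (1 : H)) • p.1, ((1 : H), a.2) • p.2))
    (by
      rintro p q ⟨h, h1, h2⟩
      exact ⟨h, by simp [h1, smul_smul], by simp [h2, smul_smul]⟩)⟩

variable {G H K X Y}

theorem BisetTensor.smul_mk (a : G × K) (p : X × Y) :
    a • (BisetTensor.mk p : BisetTensor G H K X Y) =
      BisetTensor.mk ((a.1, (1 : H)) • p.1, ((1 : H), a.2) • p.2) :=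
  rfl

variable (G H K X Y)

instance : MulAction (G × K) (BisetTensor G H K X Y) where
  one_smul q := Quotient.inductionOn q fun p => by
    refine Quotient.sound ⟨1, ?_, ?_⟩ <;> simp [Prod.mk_one_one]
  mul_smul a b q := Quotient.inductionOn q fun p => by
    refine Quotient.sound ⟨1, ?_, ?_⟩ <;> simp [smul_smul, Prod.mk_one_one]

end Tensor

section Op

/-- The opposite biset: a `(G,H)`-biset viewed as an `(H,G)`-biset via
`h · x · g := g⁻¹ · x · h⁻¹`. -/
def BisetOp (H G X : Type*) : Type _ := (fun _ _ => X) H G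

instance BisetOp.instMulAction {G H : Type*} [Group G] [Group H] (X : Type*)
    [MulAction (G × H) X] : MulAction (H × G) (BisetOp H G X) :=
  MulAction.compHom X (MulEquiv.prodComm : H × G ≃* G × H).toMonoidHom

instance BisetOp.instFinite {G H : Type*} (X : Type*) [Finite X] : Finite (BisetOp H G X) :=
  inferInstanceAs (Finite X)

end Op

section Grp

/-- The group `G` viewed as a `(G,G)`-biset via left and right multiplication. -/
structure BisetGrp (G : Type*) where
  /-- the underlying group element -/
  val : G

instance BisetGrp.instSMul {G : Type*} [Group G] : SMul (G × G) (BisetGrp G) :=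
  ⟨fun p x => ⟨p.1 * x.val * p.2⁻¹⟩⟩

theorem BisetGrp.smul_def {G : Type*} [Group G] (p : G × G) (x : BisetGrp G) :
    p • x = ⟨p.1 * x.val * p.2⁻¹⟩ := rfl

instance BisetGrp.instMulAction {G : Type*} [Group G] : MulAction (G × G) (BisetGrp G) where
  one_smul x := by
    cases x
    simp [BisetGrp.smul_def]
  mul_smul p q x := by
    cases x
    simp [BisetGrp.smul_def, mul_assoc]

instance BisetGrp.instFinite {G : Type*} [Finite G] : Finite (BisetGrp G) :=
  Finite.of_equiv G ⟨fun g => ⟨g⟩, fun x => x.val, fun _ => rfl, fun _ => rfl⟩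

end Grp

/-- A pair `(X,Y)` of `(G,H)`-bisets is an orthogonal pair if
`(X ×_H X°) ⊔ (Y ×_H Y°) ≅ G ⊔ (X ×_H Y°) ⊔ (Y ×_H X°)` as `(G,G)`-bisets;
this encodes the equation `([X] - [Y]) ·_H ([X] - [Y])° = [G]` in `B^Δ(G,G)`. -/
def IsOrthogonalPair (G H : Type*) [Group G] [Group H] (X Y : Type*)
    [MulAction (G × H) X] [MulAction (G × H) Y] : Prop :=
  IsoAsGSets (G × G)
    (BisetTensor G H G X (BisetOp H G X) ⊕ BisetTensor G H G Y (BisetOp H G Y))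
    (BisetGrp G ⊕ (BisetTensor G H G X (BisetOp H G Y) ⊕ BisetTensor G H G Y (BisetOp H G X)))

section Iota

/-- For a `G`-set `Z`, the `(G,G)`-biset `ι(Z) = G × Z` with action
`(g₁,g₂) • (g,z) = (g₁ g g₂⁻¹, g₂ • z)`. -/
structure IotaBiset (G Z : Type*) where
  /-- the group component -/
  fst : G
  /-- the `G`-set component -/
  snd : Z

instance IotaBiset.instSMul {G Z : Type*} [Group G] [MulAction G Z] :
    SMul (G × G) (IotaBiset G Z) :=
  ⟨fun p x => ⟨p.1 * x.fst * p.2⁻¹, p.2 • x.snd⟩⟩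

theorem IotaBiset.smul_def {G Z : Type*} [Group G] [MulAction G Z] (p : G × G)
    (x : IotaBiset G Z) : p • x = ⟨p.1 * x.fst * p.2⁻¹, p.2 • x.snd⟩ := rfl

instance IotaBiset.instMulAction {G Z : Type*} [Group G] [MulAction G Z] :
    MulAction (G × G) (IotaBiset G Z) where
  one_smul x := by
    cases x
    simp [IotaBiset.smul_def]
  mul_smul p q x := by
    cases x
    simp [IotaBiset.smul_def, mul_assoc, mul_smul]

instance IotaBiset.instFinite {G Z : Type*} [Finite G] [Finite Z] : Finite (IotaBiset G Z) :=
  Finite.of_equiv (G × Z) ⟨fun p => ⟨p.1, p.2⟩, fun x => (x.fst, x.snd), fun _ => rfl,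
    fun _ => rfl⟩

end Iota

namespace Statement16Aux

variable {G : Type*} [Group G] (H : Subgroup G) (α β : ↥H ≃* ↥H)

lemma mem_twisted_iff (p : G × G) :
    p ∈ twistedDiagonal H H α ↔ ∃ h : ↥H, p = ((↑(α h), ↑h) : G × G) := by
  constructor
  · rintro ⟨h, rfl⟩; exact ⟨h, rfl⟩
  · rintro ⟨h, rfl⟩; exact ⟨h, rfl⟩

lemma coset_eq_iff (p q : G × G) :
    (QuotientGroup.mk p : (G × G) ⧸ twistedDiagonal H H α) = QuotientGroup.mk q ↔
      ∃ h : ↥H, q = p * ((↑(α h), ↑h) : G × G) := by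
  rw [QuotientGroup.eq, mem_twisted_iff]
  constructor
  · rintro ⟨h, hh⟩
    refine ⟨h, ?_⟩; rw [← hh]; group
  · rintro ⟨h, hq⟩
    refine ⟨h, ?_⟩; rw [hq]; group

lemma quot_smul {s : Subgroup (G × G)} (m p : G × G) :
    m • (QuotientGroup.mk p : (G × G) ⧸ s) = QuotientGroup.mk (m * p) := rfl

/-- The tensor biset appearing in statement 16. -/
abbrev Tens :=
  BisetTensor G G G ((G × G) ⧸ twistedDiagonal H H α) ((G × G) ⧸ twistedDiagonal H H β)

/-- Piece of the inverse map on the `Δ(H,αβ,H)` summand. -/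
def psiA (c : (G × G) ⧸ twistedDiagonal H H (β.trans α)) : Tens H α β :=
  Quotient.liftOn' c
    (fun p => BisetTensor.mk
      ((QuotientGroup.mk (p.1, 1) : (G × G) ⧸ twistedDiagonal H H α),
       (QuotientGroup.mk (1, p.2) : (G × G) ⧸ twistedDiagonal H H β)))
    (by
      rintro ⟨p1, p2⟩ ⟨q1, q2⟩ hpq
      rw [QuotientGroup.leftRel_apply, mem_twisted_iff] at hpq
      obtain ⟨s, hs⟩ := hpq
      rw [Prod.ext_iff] at hs
      simp only [Prod.fst_mul, Prod.snd_mul, Prod.fst_inv, Prod.snd_inv,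
        MulEquiv.trans_apply] at hs
      obtain ⟨hs1, hs2⟩ := hs
      have hq1 : q1 = p1 * ↑(α (β s)) := by rw [← inv_mul_eq_iff_eq_mul.mp hs1]
      have hq2 : q2 = p2 * ↑s := by rw [← inv_mul_eq_iff_eq_mul.mp hs2]
      dsimp only
      refine Quotient.sound ⟨(↑(β s) : G)⁻¹, ?_, ?_⟩
      · rw [quot_smul, coset_eq_iff]
        refine ⟨(β s)⁻¹, ?_⟩
        rw [Prod.ext_iff]
        constructor <;> simp [hq1]
      · rw [quot_smul, coset_eq_iff]
        refine ⟨s⁻¹, ?_⟩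
        rw [Prod.ext_iff]
        constructor <;> simp [hq2])

/-- Piece of the inverse map on a free summand, with chosen double coset
representative `r`. -/
def psiB (r : G) (c : (G × G) ⧸ (⊥ : Subgroup (G × G))) : Tens H α β :=
  Quotient.liftOn' c
    (fun p => BisetTensor.mk
      ((QuotientGroup.mk (p.1, 1) : (G × G) ⧸ twistedDiagonal H H α),
       (QuotientGroup.mk (r, p.2) : (G × G) ⧸ twistedDiagonal H H β)))
    (by
      intro p q hpq
      rw [QuotientGroup.leftRel_apply, Subgroup.mem_bot] at hpq
      rw [inv_mul_eq_one.mp hpq])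

variable (k : ℕ) (rp : Fin k → G)

/-- The candidate equivariant bijection (from the decomposed side to the tensor). -/
def Psi :
    (((G × G) ⧸ twistedDiagonal H H (β.trans α)) ⊕
      (Σ _ : Fin k, ((G × G) ⧸ (⊥ : Subgroup (G × G))))) → Tens H α β :=
  Sum.elim (psiA H α β) (fun x => psiB H α β (rp x.1) x.2)

lemma Psi_inl_mk (p : G × G) :
    Psi H α β k rp (Sum.inl (QuotientGroup.mk p)) =
      BisetTensor.mk
        ((QuotientGroup.mk (p.1, 1) : (G × G) ⧸ twistedDiagonal H H α),
         (QuotientGroup.mk (1, p.2) : (G × G) ⧸ twistedDiagonal H H β)) := rfl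

lemma Psi_inr_mk (i : Fin k) (p : G × G) :
    Psi H α β k rp (Sum.inr ⟨i, QuotientGroup.mk p⟩) =
      BisetTensor.mk
        ((QuotientGroup.mk (p.1, 1) : (G × G) ⧸ twistedDiagonal H H α),
         (QuotientGroup.mk (rp i, p.2) : (G × G) ⧸ twistedDiagonal H H β)) := rfl

lemma Psi_equivariant (m : G × G) (y) :
    Psi H α β k rp (m • y) = m • Psi H α β k rp y := by
  obtain ⟨c⟩ | ⟨i, c⟩ := y
  · induction c using Quotient.inductionOn' with
    | h p =>
      show Psi H α β k rp (Sum.inl (m • QuotientGroup.mk p)) = _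
      rw [quot_smul, Psi_inl_mk, Psi_inl_mk, BisetTensor.smul_mk]
      congr 1
      rw [Prod.ext_iff]
      constructor
      · rw [quot_smul]; congr 1; rw [Prod.ext_iff]; constructor <;> simp
      · rw [quot_smul]; congr 1; rw [Prod.ext_iff]; constructor <;> simp
  · induction c using Quotient.inductionOn' with
    | h p =>
      show Psi H α β k rp (Sum.inr ⟨i, m • QuotientGroup.mk p⟩) = _
      rw [quot_smul, Psi_inr_mk, Psi_inr_mk, BisetTensor.smul_mk]
      congr 1
      rw [Prod.ext_iff]
      constructor
      · rw [quot_smul]; congr 1; rw [Prod.ext_iff]; constructor <;> simp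
      · rw [quot_smul]; congr 1; rw [Prod.ext_iff]; constructor <;> simp

end Statement16Aux

namespace Statement16Aux

variable {G : Type*} [Group G] {H : Subgroup G} {α β : ↥H ≃* ↥H} {k : ℕ} {rp : Fin k → G}

lemma key_triv
    (hmal : ∀ g : G, g ∉ H → H ⊓ Subgroup.map (MulAut.conj g).toMonoidHom H = ⊥)
    (hr1 : ∀ i, rp i ∉ H) (i : Fin k) (t s : ↥H)
    (hts : (↑t : G) * rp i = rp i * ↑(β s)) : t = 1 ∧ s = 1 := by
  have hmem : (↑(β s) : G) ∈ H ⊓ Subgroup.map (MulAut.conj (rp i)⁻¹).toMonoidHom H := by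
    refine ⟨(β s).2, ⟨(t : G), t.2, ?_⟩⟩
    show (rp i)⁻¹ * ↑t * ((rp i)⁻¹)⁻¹ = ↑(β s)
    rw [inv_inv, mul_assoc, hts, ← mul_assoc, inv_mul_cancel, one_mul]
  have hnotH : (rp i)⁻¹ ∉ H := fun hm => hr1 i (by simpa using H.inv_mem hm)
  rw [hmal _ hnotH, Subgroup.mem_bot] at hmem
  have hβ : β s = 1 := by exact_mod_cast hmem
  have hs : s = 1 := β.injective (by rw [hβ, map_one])
  refine ⟨?_, hs⟩
  have : (↑t : G) * rp i = rp i := by rw [hts, hβ]; simp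
  have ht : (↑t : G) = 1 := by
    have h2 : (↑t : G) * rp i = 1 * rp i := by rw [this, one_mul]
    exact mul_right_cancel h2
  exact_mod_cast ht

lemma Psi_injective
    (hmal : ∀ g : G, g ∉ H → H ⊓ Subgroup.map (MulAut.conj g).toMonoidHom H = ⊥)
    (hr1 : ∀ i, rp i ∉ H)
    (hr2 : ∀ i j : Fin k, DoubleCoset.mk H H (rp i) = DoubleCoset.mk H H (rp j) → i = j) :
    Function.Injective (Psi H α β k rp) := by
  rintro (c | ⟨i, c⟩) (c' | ⟨j, c'⟩) hyy
  · -- inl / inl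
    induction c using Quotient.inductionOn' with | h p => ?_
    induction c' using Quotient.inductionOn' with | h p' => ?_
    obtain ⟨a, e⟩ := p; obtain ⟨a', e'⟩ := p'
    rw [show (Quotient.mk'' (a, e) : (G × G) ⧸ _) = QuotientGroup.mk (a, e) from rfl,
      show (Quotient.mk'' (a', e') : (G × G) ⧸ _) = QuotientGroup.mk (a', e') from rfl] at hyy ⊢
    rw [Psi_inl_mk, Psi_inl_mk] at hyy
    obtain ⟨g, e1, e2⟩ := Quotient.exact hyy
    rw [quot_smul] at e1 e2
    obtain ⟨t, ht⟩ := (coset_eq_iff H α _ _).mp e1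
    obtain ⟨s, hs⟩ := (coset_eq_iff H β _ _).mp e2
    rw [Prod.ext_iff] at ht hs
    simp only [Prod.fst_mul, Prod.snd_mul, Prod.mk_mul_mk, one_mul, mul_one] at ht hs
    -- ht : a = a' * ↑(α t) ∧ g = ↑t ; hs : g = ↑(β s) ∧ e = e' * ↑s
    have hT : t = β s := by
      have : (↑t : G) = ↑(β s) := by rw [← ht.2, hs.1]
      exact_mod_cast this
    subst hT
    congr 1
    rw [coset_eq_iff]
    refine ⟨s⁻¹, ?_⟩
    rw [Prod.ext_iff]
    constructor
    · show a' = a * ↑((β.trans α) s⁻¹)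
      rw [ht.1]
      simp [mul_assoc, ← Subgroup.coe_mul]
    · show e' = e * ↑(s⁻¹)
      rw [hs.2]
      simp [mul_assoc, ← Subgroup.coe_mul]
  · -- inl / inr : contradiction
    induction c using Quotient.inductionOn' with | h p => ?_
    induction c' using Quotient.inductionOn' with | h p' => ?_
    obtain ⟨a, e⟩ := p; obtain ⟨u, v⟩ := p'
    rw [show (Quotient.mk'' (a, e) : (G × G) ⧸ _) = QuotientGroup.mk (a, e) from rfl] at hyy
    rw [show (Quotient.mk'' (u, v) : (G × G) ⧸ _) = QuotientGroup.mk (u, v) from rfl] at hyy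
    rw [Psi_inl_mk, Psi_inr_mk] at hyy
    obtain ⟨g, e1, e2⟩ := Quotient.exact hyy
    rw [quot_smul] at e1 e2
    obtain ⟨t, ht⟩ := (coset_eq_iff H α _ _).mp e1
    obtain ⟨s, hs⟩ := (coset_eq_iff H β _ _).mp e2
    rw [Prod.ext_iff] at ht hs
    simp only [Prod.fst_mul, Prod.snd_mul, Prod.mk_mul_mk, one_mul, mul_one] at ht hs
    -- ht : a = u * ↑(α t) ∧ g = ↑t ; hs : g * rp j = ↑(β s) ∧ e = v * ↑s
    exfalso
    refine hr1 j ?_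
    have hrj : rp j = (↑t : G) * (↑(β s))⁻¹ := by
      rw [← ht.2]
      exact eq_mul_inv_iff_mul_eq.mpr hs.1.symm
    rw [hrj]
    exact H.mul_mem t.2 (H.inv_mem (β s).2)
  · -- inr / inl : contradiction
    induction c using Quotient.inductionOn' with | h p => ?_
    induction c' using Quotient.inductionOn' with | h p' => ?_
    obtain ⟨u, v⟩ := p; obtain ⟨a, e⟩ := p'
    rw [show (Quotient.mk'' (u, v) : (G × G) ⧸ _) = QuotientGroup.mk (u, v) from rfl] at hyy
    rw [show (Quotient.mk'' (a, e) : (G × G) ⧸ _) = QuotientGroup.mk (a, e) from rfl] at hyy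
    rw [Psi_inr_mk, Psi_inl_mk] at hyy
    obtain ⟨g, e1, e2⟩ := Quotient.exact hyy
    rw [quot_smul] at e1 e2
    obtain ⟨t, ht⟩ := (coset_eq_iff H α _ _).mp e1
    obtain ⟨s, hs⟩ := (coset_eq_iff H β _ _).mp e2
    rw [Prod.ext_iff] at ht hs
    simp only [Prod.fst_mul, Prod.snd_mul, Prod.mk_mul_mk, one_mul, mul_one] at ht hs
    -- ht : u = a * ↑(α t) ∧ g = ↑t ; hs : g * rp i = ↑(β s) ∧ v = e * ↑s
    exfalso
    refine hr1 i ?_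
    have hri : rp i = g⁻¹ * ↑(β s) := eq_inv_mul_iff_mul_eq.mpr hs.1
    rw [ht.2] at hri
    rw [hri]
    exact H.mul_mem (H.inv_mem t.2) (β s).2
  · -- inr / inr
    induction c using Quotient.inductionOn' with | h p => ?_
    induction c' using Quotient.inductionOn' with | h p' => ?_
    obtain ⟨u, v⟩ := p; obtain ⟨u', v'⟩ := p'
    rw [show (Quotient.mk'' (u, v) : (G × G) ⧸ _) = QuotientGroup.mk (u, v) from rfl] at hyy ⊢
    rw [show (Quotient.mk'' (u', v') : (G × G) ⧸ _) = QuotientGroup.mk (u', v') from rfl] at hyy ⊢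
    rw [Psi_inr_mk, Psi_inr_mk] at hyy
    obtain ⟨g, e1, e2⟩ := Quotient.exact hyy
    rw [quot_smul] at e1 e2
    obtain ⟨t, ht⟩ := (coset_eq_iff H α _ _).mp e1
    obtain ⟨s, hs⟩ := (coset_eq_iff H β _ _).mp e2
    rw [Prod.ext_iff] at ht hs
    simp only [Prod.fst_mul, Prod.snd_mul, Prod.mk_mul_mk, one_mul, mul_one] at ht hs
    -- ht : u = u' * ↑(α t) ∧ g = ↑t ; hs : g * rp i = rp j * ↑(β s) ∧ v = v' * ↑s
    have hij : i = j := by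
      refine hr2 i j ?_
      rw [DoubleCoset.eq]
      refine ⟨↑t, t.2, (↑(β s) : G)⁻¹, H.inv_mem (β s).2, ?_⟩
      have hrj : rp j = g * rp i * (↑(β s))⁻¹ := eq_mul_inv_iff_mul_eq.mpr hs.1.symm
      rw [ht.2] at hrj
      exact hrj
    subst hij
    have hts : (↑t : G) * rp i = rp i * ↑(β s) := by rw [← ht.2, hs.1]
    obtain ⟨ht1, hs1⟩ := key_triv hmal hr1 i t s hts
    subst ht1; subst hs1
    simp only [OneMemClass.coe_one, mul_one, map_one] at ht hs
    rw [ht.1, hs.2]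
end Statement16Aux

namespace Statement16Aux

variable {G : Type*} [Group G] {H : Subgroup G} {α β : ↥H ≃* ↥H} {k : ℕ} {rp : Fin k → G}

lemma Psi_surjective
    (hr3 : ∀ x : G, x ∉ H → ∃ i : Fin k, ∃ h ∈ H, ∃ l ∈ H, x = h * rp i * l) :
    Function.Surjective (Psi H α β k rp) := by
  intro tt
  induction tt using Quotient.inductionOn with | h P => ?_
  obtain ⟨x, y⟩ := P
  induction x using Quotient.inductionOn' with | h p => ?_
  induction y using Quotient.inductionOn' with | h q => ?_
  obtain ⟨a, b⟩ := p; obtain ⟨c, d⟩ := q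
  by_cases hx : b⁻¹ * c ∈ H
  · refine ⟨Sum.inl (QuotientGroup.mk (a * ↑(α ⟨b⁻¹ * c, hx⟩), d)), ?_⟩
    rw [Psi_inl_mk]
    refine Quotient.sound ⟨c, ?_, ?_⟩
    · show (QuotientGroup.mk (a, b) : (G × G) ⧸ _) =
        QuotientGroup.mk (((1 : G), c) * (a * ↑(α ⟨b⁻¹ * c, hx⟩), 1))
      rw [coset_eq_iff]
      refine ⟨⟨b⁻¹ * c, hx⟩, ?_⟩
      rw [Prod.ext_iff]
      constructor
      · show (1 : G) * (a * ↑(α ⟨b⁻¹ * c, hx⟩)) = a * ↑(α ⟨b⁻¹ * c, hx⟩)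
        rw [one_mul]
      · show c * 1 = b * (b⁻¹ * c)
        rw [mul_one, ← mul_assoc, mul_inv_cancel, one_mul]
    · show (QuotientGroup.mk (c, d) : (G × G) ⧸ _) = QuotientGroup.mk ((c, (1 : G)) * (1, d))
      rw [coset_eq_iff]
      refine ⟨1, ?_⟩
      rw [Prod.ext_iff]
      constructor
      · show c * 1 = c * ↑(β 1)
        rw [map_one]; rfl
      · show (1 : G) * d = d * ↑(1 : ↥H)
        rw [one_mul]; simp
  · obtain ⟨i, h, hh, l, hl, hx0⟩ := hr3 _ hx
    refine ⟨Sum.inr ⟨i, QuotientGroup.mk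
      (a * ↑(α ⟨h, hh⟩), d * (↑(β.symm ⟨l, hl⟩) : G)⁻¹)⟩, ?_⟩
    rw [Psi_inr_mk]
    refine Quotient.sound ⟨b * h, ?_, ?_⟩
    · show (QuotientGroup.mk (a, b) : (G × G) ⧸ _) =
        QuotientGroup.mk (((1 : G), b * h) * (a * ↑(α ⟨h, hh⟩), 1))
      rw [coset_eq_iff]
      refine ⟨⟨h, hh⟩, ?_⟩
      rw [Prod.ext_iff]
      constructor
      · show (1 : G) * (a * ↑(α ⟨h, hh⟩)) = a * ↑(α ⟨h, hh⟩)
        rw [one_mul]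
      · show b * h * 1 = b * ↑(⟨h, hh⟩ : ↥H)
        rw [mul_one]
    · show (QuotientGroup.mk (c, d) : (G × G) ⧸ _) =
        QuotientGroup.mk ((b * h, (1 : G)) * (rp i, d * (↑(β.symm ⟨l, hl⟩) : G)⁻¹))
      rw [coset_eq_iff]
      refine ⟨(β.symm ⟨l, hl⟩)⁻¹, ?_⟩
      rw [Prod.ext_iff]
      constructor
      · show b * h * rp i = c * ↑(β (β.symm ⟨l, hl⟩)⁻¹)
        have hc : c = b * (h * rp i * l) := by
          rw [← hx0, ← mul_assoc, mul_inv_cancel, one_mul]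
        rw [map_inv, MulEquiv.apply_symm_apply, hc]
        simp [mul_assoc]
      · show (1 : G) * (d * (↑(β.symm ⟨l, hl⟩) : G)⁻¹) = d * ↑((β.symm ⟨l, hl⟩)⁻¹)
        rw [one_mul]
        simp

end Statement16Aux

/-- for a self-normalizing-type (malnormal) subgroup `H` of `G`
(e.g. a Frobenius complement), with `k = |H\G/H| - 1`, one has
`((G×G)/Δ(H,α,H)) ×_G ((G×G)/Δ(H,β,H)) ≅ ((G×G)/Δ(H,αβ,H)) ⊔ (k copies of G×G)`. -/
theorem statement16 {G : Type*} [Group G] [Finite G] (H : Subgroup G)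
    (hbot : H ≠ ⊥) (htop : H ≠ ⊤)
    (hmal : ∀ g : G, g ∉ H → H ⊓ Subgroup.map (MulAut.conj g).toMonoidHom H = ⊥)
    (k : ℕ) (hk : k = Nat.card (DoubleCoset.Quotient (H : Set G) (H : Set G)) - 1)
    (α β : ↥H ≃* ↥H) :
    IsoAsGSets (G × G)
      (BisetTensor G G G ((G × G) ⧸ twistedDiagonal H H α) ((G × G) ⧸ twistedDiagonal H H β))
      (((G × G) ⧸ twistedDiagonal H H (β.trans α)) ⊕
        (Σ _ : Fin k, ((G × G) ⧸ (⊥ : Subgroup (G × G))))) := by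
    classical
  haveI hQfin : Finite (DoubleCoset.Quotient (H : Set G) (H : Set G)) := Quotient.finite _
  haveI := Fintype.ofFinite (DoubleCoset.Quotient (H : Set G) (H : Set G))
  have hmemH : ∀ x : G, x ∈ H ↔ DoubleCoset.mk H H x = DoubleCoset.mk H H 1 := by
    intro x
    rw [DoubleCoset.eq]
    constructor
    · intro hx
      exact ⟨x⁻¹, H.inv_mem hx, 1, H.one_mem, by group⟩
    · rintro ⟨h, hh, l, hl, hxl⟩
      have hx : x = h⁻¹ * 1 * l⁻¹ := by rw [hxl]; group
      rw [mul_one] at hx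
      rw [hx]
      exact H.mul_mem (H.inv_mem hh) (H.inv_mem hl)
  have hcard : Nat.card {q : DoubleCoset.Quotient (H : Set G) (H : Set G) //
      q ≠ DoubleCoset.mk H H 1} = k := by
    rw [hk]
    simp only [Nat.card_eq_fintype_card]
    rw [Fintype.card_subtype_compl, Fintype.card_subtype_eq]
  let eF : {q : DoubleCoset.Quotient (H : Set G) (H : Set G) // q ≠ DoubleCoset.mk H H 1} ≃ Fin k :=
    Finite.equivFinOfCardEq hcard
  let rp : Fin k → G := fun i => Quotient.out ((eF.symm i).1)
  have hmk : ∀ i, DoubleCoset.mk H H (rp i) = (eF.symm i).1 := fun i => DoubleCoset.out_eq' H H _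
  have hr1 : ∀ i, rp i ∉ H := by
    intro i hi
    exact (eF.symm i).2 ((hmk i) ▸ (hmemH _).mp hi)
  have hr2 : ∀ i j : Fin k, DoubleCoset.mk H H (rp i) = DoubleCoset.mk H H (rp j) → i = j := by
    intro i j hij
    rw [hmk i, hmk j] at hij
    exact eF.symm.injective (Subtype.ext hij)
  have hr3 : ∀ x : G, x ∉ H → ∃ i : Fin k, ∃ h ∈ H, ∃ l ∈ H, x = h * rp i * l := by
    intro x hx
    have hq : DoubleCoset.mk H H x ≠ DoubleCoset.mk H H 1 := fun hc => hx ((hmemH x).mpr hc)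
    refine ⟨eF ⟨DoubleCoset.mk H H x, hq⟩, ?_⟩
    have : DoubleCoset.mk H H (rp (eF ⟨DoubleCoset.mk H H x, hq⟩)) = DoubleCoset.mk H H x := by
      rw [hmk, Equiv.symm_apply_apply]
    exact (DoubleCoset.eq H H _ _).mp this
  have hbij : Function.Bijective (Statement16Aux.Psi H α β k rp) :=
    ⟨Statement16Aux.Psi_injective hmal hr1 hr2, Statement16Aux.Psi_surjective hr3⟩
  refine ⟨(Equiv.ofBijective _ hbij).symm, fun m x => ?_⟩
  apply hbij.1
  have h1 : ∀ z, Statement16Aux.Psi H α β k rp ((Equiv.ofBijective _ hbij).symm z) = z :=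
    fun z => (Equiv.ofBijective _ hbij).apply_symm_apply z
  rw [h1, Statement16Aux.Psi_equivariant, h1]
end

section
/- Let G be a finite group and H ≤ G a subgroup with H ≠ {1}, H ≠ G, and H ∩ gHg⁻¹ = {1} for every g ∈ G∖H. For α ∈ Aut(H) set X_α := G ⊔ ((G×G)/Δ(H,α,H)) and Y := (G×G)/Δ(H), where G is the (G,G)-biset given by left and right multiplication. Then for all α, β ∈ Aut(H) there is an isomorphism of (G,G)-bisets (X_α ×_G X_β) ⊔ (Y ×_G Y) ⊔ Y ≅ X_{αβ} ⊔ (X_α ×_G Y) ⊔ (Y ×_G X_β); in particular, (X_α, Y) is an orthogonal pair, encoding the orthogonal unit γ_α = [Δ(G)] − [Δ(H)] + [Δ(H,α,H)] of B^Δ(G,G), and γ_α ·_G γ_β = γ_{αβ}. -/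
open MulAction

section S17Aux
open MulAction

namespace S17

/-! ### Generic lemmas about `IsoAsGSets` -/

theorem iso_refl (M X : Type*) [SMul M X] : IsoAsGSets M X X :=
  ⟨Equiv.refl X, fun _ _ => rfl⟩

theorem iso_symm {M X Y : Type*} [SMul M X] [SMul M Y] (h : IsoAsGSets M X Y) :
    IsoAsGSets M Y X := by
  obtain ⟨e, he⟩ := h
  refine ⟨e.symm, fun m y => e.injective ?_⟩
  rw [Equiv.apply_symm_apply, he, Equiv.apply_symm_apply]

theorem iso_trans {M X Y Z : Type*} [SMul M X] [SMul M Y] [SMul M Z]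
    (h1 : IsoAsGSets M X Y) (h2 : IsoAsGSets M Y Z) : IsoAsGSets M X Z := by
  obtain ⟨e, he⟩ := h1; obtain ⟨f, hf⟩ := h2
  exact ⟨e.trans f, fun m x => by simp [he, hf]⟩

theorem iso_sumCongr {M X Y X' Y' : Type*} [SMul M X] [SMul M Y] [SMul M X'] [SMul M Y']
    (h1 : IsoAsGSets M X X') (h2 : IsoAsGSets M Y Y') : IsoAsGSets M (X ⊕ Y) (X' ⊕ Y') := by
  obtain ⟨e, he⟩ := h1; obtain ⟨f, hf⟩ := h2
  refine ⟨Equiv.sumCongr e f, fun m x => ?_⟩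
  cases x <;> simp [he, hf]

theorem iso_tensorCongr {G H K : Type*} [Group G] [Group H] [Group K]
    {X Y X' Y' : Type*} [MulAction (G × H) X] [MulAction (H × K) Y]
    [MulAction (G × H) X'] [MulAction (H × K) Y']
    (h1 : IsoAsGSets (G × H) X X') (h2 : IsoAsGSets (H × K) Y Y') :
    IsoAsGSets (G × K) (BisetTensor G H K X Y) (BisetTensor G H K X' Y') := by
  obtain ⟨e, he⟩ := h1; obtain ⟨f, hf⟩ := h2
  have hcond : ∀ p q : X × Y, (bisetSetoid G H K X Y) p q ↔
      (bisetSetoid G H K X' Y') (e p.1, f p.2) (e q.1, f q.2) := by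
    rintro ⟨x1, y1⟩ ⟨x2, y2⟩
    constructor
    · rintro ⟨h, h1', h2'⟩
      refine ⟨h, ?_, ?_⟩
      · show e x2 = ((1 : G), h) • e x1
        rw [show x2 = ((1 : G), h) • x1 from h1', he]
      · show f y2 = (h, (1 : K)) • f y1
        rw [show y2 = (h, (1 : K)) • y1 from h2', hf]
    · rintro ⟨h, h1', h2'⟩
      refine ⟨h, e.injective ?_, f.injective ?_⟩
      · rw [show e x2 = ((1 : G), h) • e x1 from h1', he]
      · rw [show f y2 = (h, (1 : K)) • f y1 from h2', hf]
  refine ⟨(Quotient.congr (Equiv.prodCongr e f) hcond :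
      BisetTensor G H K X Y ≃ BisetTensor G H K X' Y'), fun m q => ?_⟩
  induction q using Quotient.inductionOn with
  | h p =>
    exact congrArg (Quotient.mk (bisetSetoid G H K X' Y')) (Prod.ext (he _ _) (hf _ _))

end S17
end S17Aux
section S17Aux2
namespace S17
open MulAction

variable {G : Type*} [Group G]

/-! ### Coset lemmas for twisted diagonals -/

theorem mem_twisted (H : Subgroup G) (α : ↥H ≃* ↥H) (p : G × G) :
    p ∈ twistedDiagonal H H α ↔ ∃ s : ↥H, p.1 = ↑(α s) ∧ p.2 = ↑s := by
  unfold twistedDiagonal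
  rw [MonoidHom.mem_range]
  constructor
  · rintro ⟨s, rfl⟩; exact ⟨s, rfl, rfl⟩
  · rintro ⟨s, h1, h2⟩; exact ⟨s, Prod.ext h1.symm h2.symm⟩

theorem leftRel_iff {H : Subgroup G} (α : ↥H ≃* ↥H) (p p' : G × G) :
    (QuotientGroup.leftRel (twistedDiagonal H H α)) p p' ↔
      ∃ s : ↥H, p'.1 = p.1 * ↑(α s) ∧ p'.2 = p.2 * ↑s := by
  rw [QuotientGroup.leftRel_apply, mem_twisted]
  constructor
  · rintro ⟨s, h1, h2⟩
    refine ⟨s, ?_, ?_⟩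
    · rw [show (p⁻¹ * p').1 = p.1⁻¹ * p'.1 from rfl] at h1
      rw [← h1, mul_inv_cancel_left]
    · rw [show (p⁻¹ * p').2 = p.2⁻¹ * p'.2 from rfl] at h2
      rw [← h2, mul_inv_cancel_left]
  · rintro ⟨s, h1, h2⟩
    exact ⟨s, by rw [show (p⁻¹ * p').1 = p.1⁻¹ * p'.1 from rfl, h1, inv_mul_cancel_left],
      by rw [show (p⁻¹ * p').2 = p.2⁻¹ * p'.2 from rfl, h2, inv_mul_cancel_left]⟩

theorem ymk_eq {H : Subgroup G} (α : ↥H ≃* ↥H) (a b : G) (s : ↥H) :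
    (QuotientGroup.mk (a, b) : (G × G) ⧸ twistedDiagonal H H α) =
      QuotientGroup.mk (a * ↑(α s), b * ↑s) := by
  rw [QuotientGroup.eq, mem_twisted]
  exact ⟨s, by simp, by simp⟩

/-! ### Double cosets -/

variable (H : Subgroup G)

def dSetoid : Setoid G where
  r w w' := ∃ s t : H, w' = ↑s * w * ↑t
  iseqv := by
    refine ⟨fun w => ⟨1, 1, by simp⟩, ?_, ?_⟩
    · rintro w w' ⟨s, t, rfl⟩
      refine ⟨s⁻¹, t⁻¹, ?_⟩
      push_cast
      group
    · rintro a b c ⟨s, t, rfl⟩ ⟨s', t', rfl⟩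
      refine ⟨s' * s, t * t', ?_⟩
      push_cast
      group

def DQ := Quotient (dSetoid H)

def dmk (w : G) : DQ H := Quotient.mk (dSetoid H) w

theorem dmk_smul (s t : H) (w : G) : dmk H (↑s * w * ↑t) = dmk H w :=
  (Quotient.sound (⟨s, t, rfl⟩ : (dSetoid H).r w (↑s * w * ↑t))).symm

theorem exists_dec (w : G) : ∃ p : H × H, w = ↑p.1 * (dmk H w).out * ↑p.2 := by
  have h' : ∃ s t : H, w = ↑s * (dmk H w).out * ↑t := Quotient.exact ((dmk H w).out_eq)
  obtain ⟨s, t, h⟩ := h'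
  exact ⟨(s, t), h⟩

noncomputable def dec (w : G) : H × H := (exists_dec H w).choose

theorem dec_spec (w : G) : w = ↑(dec H w).1 * (dmk H w).out * ↑(dec H w).2 :=
  (exists_dec H w).choose_spec

theorem out_notin {w : G} (hw : w ∉ H) : (dmk H w).out ∉ H := by
  intro hmem
  obtain ⟨⟨s, t⟩, hp⟩ := exists_dec H w
  exact hw (by rw [hp]; exact H.mul_mem (H.mul_mem s.2 hmem) t.2)

variable {H}
variable (hmal : ∀ g : G, g ∉ H → H ⊓ Subgroup.map (MulAut.conj g).toMonoidHom H = ⊥)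

include hmal in
theorem mal_unique {g : G} (hg : g ∉ H) {s t s' t' : H}
    (h : (s : G) * g * ↑t = ↑s' * g * ↑t') : s = s' ∧ t = t' := by
  have h1 : ((↑s')⁻¹ * ↑s : G) ∈ H ⊓ Subgroup.map (MulAut.conj g).toMonoidHom H := by
    rw [Subgroup.mem_inf]
    constructor
    · exact H.mul_mem (H.inv_mem s'.2) s.2
    · rw [Subgroup.mem_map]
      refine ⟨↑t' * (↑t)⁻¹, H.mul_mem t'.2 (H.inv_mem t.2), ?_⟩
      simp only [MulEquiv.coe_toMonoidHom, MulAut.conj_apply]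
      calc g * (↑t' * (↑t)⁻¹) * g⁻¹
          = (↑s')⁻¹ * (↑s' * g * ↑t') * (↑t)⁻¹ * g⁻¹ := by group
        _ = (↑s')⁻¹ * (↑s * g * ↑t) * (↑t)⁻¹ * g⁻¹ := by rw [h]
        _ = (↑s')⁻¹ * ↑s := by group
  rw [hmal g hg, Subgroup.mem_bot, inv_mul_eq_one] at h1
  have hs : s = s' := Subtype.ext h1.symm
  refine ⟨hs, ?_⟩
  subst hs
  simpa [mul_assoc] using h

include hmal in
theorem dec_eq {w : G} (hw : w ∉ H) (s t : H)
    (h : w = ↑s * (dmk H w).out * ↑t) : dec H w = (s, t) := by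
  have h2 := dec_spec H w
  have := mal_unique hmal (out_notin H hw) (h2.symm.trans h)
  exact Prod.ext this.1 this.2

include hmal in
theorem dec_mul {w : G} (hw : w ∉ H) (s t : H) :
    dec H (↑s * w * ↑t) = (s * (dec H w).1, (dec H w).2 * t) := by
  have hw' : (↑s : G) * w * ↑t ∉ H := by
    intro hmem
    refine hw ?_
    have := H.mul_mem (H.mul_mem (H.inv_mem s.2) hmem) (H.inv_mem t.2)
    simpa [mul_assoc] using this
  apply dec_eq hmal hw'
  rw [show (dmk H (↑s * w * ↑t)).out = (dmk H w).out from congrArg Quotient.out (dmk_smul H s t w)]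
  push_cast
  conv_lhs => rw [dec_spec H w]
  group

end S17
end S17Aux2
section S17Aux3
namespace S17
open MulAction

/-! ### The free biset indexed by a type -/

structure FreeB (G Q : Type*) where
  q : Q
  x : G
  y : G

instance FreeB.instSMul {G Q : Type*} [Group G] : SMul (G × G) (FreeB G Q) :=
  ⟨fun p a => ⟨a.q, p.1 * a.x, p.2 * a.y⟩⟩

theorem FreeB.smul_def {G Q : Type*} [Group G] (p : G × G) (a : FreeB G Q) :
    p • a = ⟨a.q, p.1 * a.x, p.2 * a.y⟩ := rfl

instance FreeB.instMulAction {G Q : Type*} [Group G] : MulAction (G × G) (FreeB G Q) where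
  one_smul a := by cases a; simp [FreeB.smul_def]
  mul_smul p q a := by cases a; simp [FreeB.smul_def, mul_assoc]

variable {G : Type*} [Group G] {H : Subgroup G}

def Qn (H : Subgroup G) : Type _ := {D : DQ H // D.out ∉ H}

/-! ### Generic coset/tensor moves -/

theorem yeq {H : Subgroup G} (α : ↥H ≃* ↥H) (p p' : G × G) (s : ↥H)
    (h1 : p.1⁻¹ * p'.1 = ↑(α s)) (h2 : p.2⁻¹ * p'.2 = ↑s) :
    (QuotientGroup.mk p : (G × G) ⧸ twistedDiagonal H H α) = QuotientGroup.mk p' := by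
  rw [QuotientGroup.eq, mem_twisted]
  exact ⟨s, h1, h2⟩

theorem tmk_eq {G H K : Type*} [Group G] [Group H] [Group K] {X Y : Type*}
    [MulAction (G × H) X] [MulAction (H × K) Y] {x x' : X} {y y' : Y} (h : H)
    (h1 : x' = ((1 : G), h) • x) (h2 : y' = (h, (1 : K)) • y) :
    (BisetTensor.mk (x, y) : BisetTensor G H K X Y) = BisetTensor.mk (x', y') :=
  Quotient.sound ⟨h, h1, h2⟩

/-! ### The classifying map -/

open scoped Classical in
noncomputable def frc (α β : ↥H ≃* ↥H) (a w d : G) :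
    ((G × G) ⧸ twistedDiagonal H H (β.trans α)) ⊕ FreeB G (Qn H) :=
  if hw : w ∈ H then Sum.inl (QuotientGroup.mk (a * ↑(α ⟨w, hw⟩), d))
  else Sum.inr ⟨⟨dmk H w, out_notin H hw⟩, a * ↑(α (dec H w).1),
    d * (↑(β.symm (dec H w).2))⁻¹⟩

theorem frc_smul (α β : ↥H ≃* ↥H) (m : G × G) (a w d : G) :
    frc α β (m.1 * a) w (m.2 * d) = m • frc α β a w d := by
  unfold frc
  split_ifs with hw
  · exact congrArg Sum.inl (congrArg QuotientGroup.mk (Prod.ext (mul_assoc _ _ _) rfl))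
  · rw [show m • (Sum.inr ⟨⟨dmk H w, out_notin H hw⟩, a * ↑(α (dec H w).1),
        d * (↑(β.symm (dec H w).2))⁻¹⟩ :
        ((G × G) ⧸ twistedDiagonal H H (β.trans α)) ⊕ FreeB G (Qn H)) =
      Sum.inr ⟨⟨dmk H w, out_notin H hw⟩, m.1 * (a * ↑(α (dec H w).1)),
        m.2 * (d * (↑(β.symm (dec H w).2))⁻¹)⟩ from rfl]
    simp [mul_assoc]

variable (hmal : ∀ g : G, g ∉ H → H ⊓ Subgroup.map (MulAut.conj g).toMonoidHom H = ⊥)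

include hmal in
theorem frc_move (α β : ↥H ≃* ↥H) (a w d : G) (s t : ↥H) :
    frc α β (a * ↑(α s)) (↑s⁻¹ * w * ↑(β t)) (d * ↑t) = frc α β a w d := by
  unfold frc
  by_cases hw : w ∈ H
  · have hw' : ((↑s⁻¹ : G) * w * ↑(β t) : G) ∈ H :=
      H.mul_mem (H.mul_mem (s⁻¹).2 hw) (β t).2
    rw [dif_pos hw, dif_pos hw']
    have key : (⟨(↑s⁻¹ : G) * w * ↑(β t), hw'⟩ : ↥H) = s⁻¹ * ⟨w, hw⟩ * β t := rfl
    rw [key]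
    have e1 : a * ↑(α s) * ↑(α (s⁻¹ * ⟨w, hw⟩ * β t))
        = a * ↑(α ⟨w, hw⟩) * ↑((β.trans α) t) := by
      push_cast [map_mul, map_inv, MulEquiv.trans_apply]
      group
    rw [e1]
    exact congrArg Sum.inl ((ymk_eq (β.trans α) _ _ t).symm)
  · have hw' : ((↑s⁻¹ : G) * w * ↑(β t) : G) ∉ H := by
      intro hmem
      refine hw ?_
      have := H.mul_mem (H.mul_mem s.2 hmem) (H.inv_mem (β t).2)
      simpa [mul_assoc] using this
    rw [dif_neg hw, dif_neg hw']
    have hd : dec H ((↑s⁻¹ : G) * w * ↑(β t)) = (s⁻¹ * (dec H w).1, (dec H w).2 * β t) :=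
      dec_mul hmal hw s⁻¹ (β t)
    have hq : (⟨dmk H ((↑s⁻¹ : G) * w * ↑(β t)), out_notin H hw'⟩ : Qn H)
        = ⟨dmk H w, out_notin H hw⟩ :=
      Subtype.ext (dmk_smul H s⁻¹ (β t) w)
    rw [hd, hq]
    have ex : a * ↑(α s) * ↑(α ((s⁻¹ * (dec H w).1, (dec H w).2 * β t).1))
        = a * ↑(α (dec H w).1) := by
      push_cast [map_mul, map_inv]
      group
    have ey : d * ↑t * (↑(β.symm ((s⁻¹ * (dec H w).1, (dec H w).2 * β t).2)))⁻¹
        = d * (↑(β.symm (dec H w).2))⁻¹ := by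
      push_cast [map_mul, MulEquiv.symm_apply_apply]
      group
    rw [ex, ey]

/-! ### The decomposition `Y_α ⊗ Y_β ≅ Y_{αβ} ⊕ Free` -/

include hmal in
theorem phi_wd2 (α β : ↥H ≃* ↥H) : ∀ (p q p' q' : G × G),
    (QuotientGroup.leftRel (twistedDiagonal H H α)) p p' →
    (QuotientGroup.leftRel (twistedDiagonal H H β)) q q' →
    frc α β p.1 (p.2⁻¹ * q.1) q.2 = frc α β p'.1 (p'.2⁻¹ * q'.1) q'.2 := by
  intro p q p' q' hp hq
  rw [leftRel_iff] at hp hq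
  obtain ⟨s, hs1, hs2⟩ := hp
  obtain ⟨t, ht1, ht2⟩ := hq
  rw [hs1, hs2, ht1, ht2]
  rw [show (p.2 * ↑s)⁻¹ * (q.1 * ↑(β t)) = ↑s⁻¹ * (p.2⁻¹ * q.1) * ↑(β t) by
    push_cast; group]
  exact (frc_move hmal α β p.1 (p.2⁻¹ * q.1) q.2 s t).symm

noncomputable def PhiAux (α β : ↥H ≃* ↥H) :
    ((G × G) ⧸ twistedDiagonal H H α) → ((G × G) ⧸ twistedDiagonal H H β) →
    ((G × G) ⧸ twistedDiagonal H H (β.trans α)) ⊕ FreeB G (Qn H) :=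
  Quotient.lift₂ (fun p q : G × G => frc α β p.1 (p.2⁻¹ * q.1) q.2)
    (fun p q p' q' hp hq => phi_wd2 hmal α β p q p' q' hp hq)

noncomputable def Phi (α β : ↥H ≃* ↥H) :
    BisetTensor G G G ((G × G) ⧸ twistedDiagonal H H α) ((G × G) ⧸ twistedDiagonal H H β) →
    ((G × G) ⧸ twistedDiagonal H H (β.trans α)) ⊕ FreeB G (Qn H) :=
  Quotient.lift (fun z => PhiAux hmal α β z.1 z.2) (by
    rintro ⟨x, y⟩ ⟨x', y'⟩ ⟨h, h1, h2⟩
    induction x using Quotient.inductionOn with | h p => ?_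
    induction y using Quotient.inductionOn with | h q => ?_
    have h1' : x' = ((1 : G), h) • (QuotientGroup.mk p : (G × G) ⧸ twistedDiagonal H H α) := h1
    have h2' : y' = (h, (1 : G)) • (QuotientGroup.mk q : (G × G) ⧸ twistedDiagonal H H β) := h2
    subst h1' h2'
    show frc α β p.1 (p.2⁻¹ * q.1) q.2
        = frc α β (1 * p.1) ((h * p.2)⁻¹ * (h * q.1)) (1 * q.2)
    rw [one_mul, one_mul, show (h * p.2)⁻¹ * (h * q.1) = p.2⁻¹ * q.1 by group])

noncomputable def Psi (α β : ↥H ≃* ↥H) :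
    (((G × G) ⧸ twistedDiagonal H H (β.trans α)) ⊕ FreeB G (Qn H)) →
    BisetTensor G G G ((G × G) ⧸ twistedDiagonal H H α) ((G × G) ⧸ twistedDiagonal H H β) :=
  Sum.elim
    (Quotient.lift (fun p : G × G => BisetTensor.mk
        ((QuotientGroup.mk (p.1, 1) : (G × G) ⧸ twistedDiagonal H H α),
         (QuotientGroup.mk (1, p.2) : (G × G) ⧸ twistedDiagonal H H β)))
      (by
        intro p p' hp
        have hp' : (QuotientGroup.leftRel (twistedDiagonal H H (β.trans α))) p p' := hp
        rw [leftRel_iff] at hp'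
        obtain ⟨t, h1, h2⟩ := hp'
        rw [h1, h2]
        refine tmk_eq ((↑(β t))⁻¹ : G) ?_ ?_
        · refine (yeq α ((1 : G) * p.1, (↑(β t))⁻¹ * 1)
            (p.1 * ↑((β.trans α) t), 1) (β t) ?_ ?_).symm
          · simp only [MulEquiv.trans_apply]
            group
          · group
        · refine (yeq β ((↑(β t))⁻¹ * 1, (1 : G) * p.2)
            (1, p.2 * ↑t) t ?_ ?_).symm
          · group
          · group))
    (fun u => BisetTensor.mk
      ((QuotientGroup.mk (u.x, 1) : (G × G) ⧸ twistedDiagonal H H α),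
       (QuotientGroup.mk ((u.q).val.out, u.y) : (G × G) ⧸ twistedDiagonal H H β)))

include hmal in
theorem tensor_iso (α β : ↥H ≃* ↥H) :
    IsoAsGSets (G × G)
      (BisetTensor G G G ((G × G) ⧸ twistedDiagonal H H α)
        ((G × G) ⧸ twistedDiagonal H H β))
      (((G × G) ⧸ twistedDiagonal H H (β.trans α)) ⊕ FreeB G (Qn H)) := by
  refine ⟨⟨Phi hmal α β, Psi α β, ?_, ?_⟩, ?_⟩
  · -- left inverse : Psi ∘ Phi = id
    intro z
    induction z using Quotient.inductionOn with | h zz => ?_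
    obtain ⟨x, y⟩ := zz
    induction x using Quotient.inductionOn with | h p => ?_
    induction y using Quotient.inductionOn with | h q => ?_
    obtain ⟨a, b⟩ := p
    obtain ⟨c, d⟩ := q
    show Psi α β (frc α β a (b⁻¹ * c) d) = BisetTensor.mk (QuotientGroup.mk (a, b), QuotientGroup.mk (c, d))
    unfold frc
    split_ifs with hw
    · -- w ∈ H
      show BisetTensor.mk
          ((QuotientGroup.mk (a * ↑(α ⟨b⁻¹ * c, hw⟩), 1) : (G × G) ⧸ twistedDiagonal H H α),
           (QuotientGroup.mk (1, d) : (G × G) ⧸ twistedDiagonal H H β)) = _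
      refine Eq.symm (Eq.trans (tmk_eq (b⁻¹) (x' := QuotientGroup.mk (a, 1))
          (y' := QuotientGroup.mk (b⁻¹ * c, d)) ?_ ?_) ?_)
      · exact (yeq α (1 * a, b⁻¹ * b) (a, 1) 1 (by simp) (by simp)).symm
      · exact congrArg QuotientGroup.mk (Prod.ext rfl (one_mul d).symm)
      refine Eq.trans (tmk_eq ((b⁻¹ * c)⁻¹)
          (x' := QuotientGroup.mk (a * ↑(α ⟨b⁻¹ * c, hw⟩), 1))
          (y' := QuotientGroup.mk (1, d)) ?_ ?_) rfl
      · refine (yeq α (1 * a, (b⁻¹ * c)⁻¹ * 1) (a * ↑(α ⟨b⁻¹ * c, hw⟩), 1) ⟨b⁻¹ * c, hw⟩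
          (by group) ?_).symm
        show ((b⁻¹ * c)⁻¹ * 1)⁻¹ * 1 = b⁻¹ * c
        group
      · exact (yeq β ((b⁻¹ * c)⁻¹ * (b⁻¹ * c), 1 * d) (1, d) 1 (by simp [mul_assoc]) (by simp)).symm
    · -- w ∉ H
      show BisetTensor.mk
          ((QuotientGroup.mk (a * ↑(α (dec H (b⁻¹ * c)).1), 1) : (G × G) ⧸ twistedDiagonal H H α),
           (QuotientGroup.mk ((dmk H (b⁻¹ * c)).out, d * (↑(β.symm (dec H (b⁻¹ * c)).2))⁻¹) :
              (G × G) ⧸ twistedDiagonal H H β)) = _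
      have hspec := dec_spec H (b⁻¹ * c)
      refine Eq.symm (Eq.trans (tmk_eq (b⁻¹) (x' := QuotientGroup.mk (a, 1))
          (y' := QuotientGroup.mk (b⁻¹ * c, d)) ?_ ?_) ?_)
      · exact (yeq α (1 * a, b⁻¹ * b) (a, 1) 1 (by simp) (by simp)).symm
      · exact congrArg QuotientGroup.mk (Prod.ext rfl (one_mul d).symm)
      refine Eq.trans (tmk_eq ((↑(dec H (b⁻¹ * c)).1)⁻¹ : G)
          (x' := QuotientGroup.mk (a * ↑(α (dec H (b⁻¹ * c)).1), 1))
          (y' := QuotientGroup.mk ((dmk H (b⁻¹ * c)).out * ↑(dec H (b⁻¹ * c)).2, d)) ?_ ?_) ?_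
      · exact (yeq α (1 * a, (↑(dec H (b⁻¹ * c)).1)⁻¹ * 1)
          (a * ↑(α (dec H (b⁻¹ * c)).1), 1) (dec H (b⁻¹ * c)).1 (by group) (by group)).symm
      · refine (yeq β ((↑(dec H (b⁻¹ * c)).1)⁻¹ * (b⁻¹ * c), 1 * d)
          ((dmk H (b⁻¹ * c)).out * ↑(dec H (b⁻¹ * c)).2, d) 1 ?_ (by simp)).symm
        rw [map_one, OneMemClass.coe_one]
        generalize hd : dec H (b⁻¹ * c) = D at hspec ⊢
        generalize hg : (dmk H (b⁻¹ * c)).out = g at hspec ⊢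
        rw [hspec]
        group
      · refine congrArg BisetTensor.mk (Prod.ext rfl ?_)
        refine yeq β ((dmk H (b⁻¹ * c)).out * ↑(dec H (b⁻¹ * c)).2, d)
          ((dmk H (b⁻¹ * c)).out, d * (↑(β.symm (dec H (b⁻¹ * c)).2))⁻¹)
          ((β.symm (dec H (b⁻¹ * c)).2)⁻¹) ?_ ?_
        · rw [map_inv, MulEquiv.apply_symm_apply]
          push_cast
          group
        · push_cast
          group
  · -- right inverse : Phi ∘ Psi = id
    rintro (z | u)
    · induction z using Quotient.inductionOn with | h p => ?_
      obtain ⟨a, d⟩ := p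
      show frc α β a ((1 : G)⁻¹ * 1) d = Sum.inl (QuotientGroup.mk (a, d))
      rw [show ((1 : G)⁻¹ * 1 : G) = 1 by group]
      unfold frc
      rw [dif_pos H.one_mem]
      refine congrArg Sum.inl (congrArg QuotientGroup.mk (Prod.ext ?_ rfl))
      rw [show (⟨(1 : G), H.one_mem⟩ : ↥H) = 1 from rfl, map_one]
      simp
    · obtain ⟨⟨D, hD⟩, x, y⟩ := u
      show frc α β x ((1 : G)⁻¹ * D.out) y = Sum.inr ⟨⟨D, hD⟩, x, y⟩
      rw [show ((1 : G)⁻¹ * D.out : G) = D.out by group]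
      unfold frc
      rw [dif_neg hD]
      have hout : (dmk H D.out).out = D.out := by
        rw [show dmk H D.out = D from Quotient.out_eq D]
      have hdec : dec H D.out = (1, 1) := by
        refine dec_eq hmal hD 1 1 ?_
        rw [hout]
        simp
      rw [hdec]
      refine congrArg Sum.inr ?_
      have h1 : (⟨dmk H D.out, out_notin H hD⟩ : Qn H) = ⟨D, hD⟩ :=
        Subtype.ext (Quotient.out_eq D)
      rw [h1]
      simp
  · -- equivariance
    intro m z
    induction z using Quotient.inductionOn with | h zz => ?_
    obtain ⟨x, y⟩ := zz
    induction x using Quotient.inductionOn with | h p => ?_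
    induction y using Quotient.inductionOn with | h q => ?_
    show frc α β (m.1 * p.1) ((1 * p.2)⁻¹ * (1 * q.1)) (m.2 * q.2)
        = m • frc α β p.1 (p.2⁻¹ * q.1) q.2
    rw [one_mul, one_mul]
    exact frc_smul α β m p.1 (p.2⁻¹ * q.1) q.2

/-! ### Unit isomorphisms -/

theorem unit_left (Z : Type*) [MulAction (G × G) Z] :
    IsoAsGSets (G × G) (BisetTensor G G G (BisetGrp G) Z) Z := by
  refine ⟨⟨Quotient.lift (fun p : BisetGrp G × Z => (p.1.val, (1 : G)) • p.2) ?_,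
    fun z => BisetTensor.mk (⟨1⟩, z), ?_, ?_⟩, ?_⟩
  · rintro ⟨x, z⟩ ⟨x', z'⟩ ⟨h, h1, h2⟩
    dsimp only
    rw [show x' = ((1 : G), h) • x from h1, show z' = (h, (1 : G)) • z from h2,
      BisetGrp.smul_def]
    rw [smul_smul]
    congr 1
    exact Prod.ext (by show x.val = 1 * x.val * h⁻¹ * h; group) (by show (1 : G) = 1 * 1; group)
  · intro q
    induction q using Quotient.inductionOn with | h p => ?_
    obtain ⟨⟨v⟩, z⟩ := p
    show BisetTensor.mk ((⟨1⟩ : BisetGrp G), ((v, (1 : G)) • z)) = BisetTensor.mk (⟨v⟩, z)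
    refine (tmk_eq v ?_ rfl).symm
    rw [BisetGrp.smul_def]
    exact congrArg BisetGrp.mk (by group)
  · intro z
    show ((1 : G), (1 : G)) • z = z
    exact one_smul _ z
  · intro m q
    induction q using Quotient.inductionOn with | h p => ?_
    obtain ⟨⟨v⟩, z⟩ := p
    show ((m.1 * v * (1 : G)⁻¹, (1 : G)) • (((1 : G), m.2) • z)) = m • ((v, (1 : G)) • z)
    rw [smul_smul, smul_smul]
    congr 1
    exact Prod.ext (by show m.1 * v * 1⁻¹ * 1 = m.1 * v; group) (by show 1 * m.2 = m.2 * 1; group)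

theorem unit_right (Z : Type*) [MulAction (G × G) Z] :
    IsoAsGSets (G × G) (BisetTensor G G G Z (BisetGrp G)) Z := by
  refine ⟨⟨Quotient.lift (fun p : Z × BisetGrp G => ((1 : G), p.2.val⁻¹) • p.1) ?_,
    fun z => BisetTensor.mk (z, ⟨1⟩), ?_, ?_⟩, ?_⟩
  · rintro ⟨z, x⟩ ⟨z', x'⟩ ⟨h, h1, h2⟩
    dsimp only
    rw [show z' = ((1 : G), h) • z from h1, show x' = (h, (1 : G)) • x from h2,
      BisetGrp.smul_def]
    rw [smul_smul]
    congr 1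
    exact Prod.ext (by show (1 : G) = 1 * 1; group)
      (by show x.val⁻¹ = (h * x.val * 1⁻¹)⁻¹ * h; group)
  · intro q
    induction q using Quotient.inductionOn with | h p => ?_
    obtain ⟨z, ⟨v⟩⟩ := p
    show BisetTensor.mk ((((1 : G), v⁻¹) • z), (⟨1⟩ : BisetGrp G)) = BisetTensor.mk (z, ⟨v⟩)
    refine (tmk_eq v⁻¹ rfl ?_).symm
    rw [BisetGrp.smul_def]
    exact congrArg BisetGrp.mk (by group)
  · intro z
    show ((1 : G), ((1 : G))⁻¹) • z = z
    rw [inv_one]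
    exact one_smul _ z
  · intro m q
    induction q using Quotient.inductionOn with | h p => ?_
    obtain ⟨z, ⟨v⟩⟩ := p
    show (((1 : G), (1 * v * m.2⁻¹)⁻¹) • ((m.1, (1 : G)) • z)) = m • (((1 : G), v⁻¹) • z)
    rw [smul_smul, smul_smul]
    congr 1
    exact Prod.ext (by show 1 * m.1 = m.1 * 1; group)
      (by show (1 * v * m.2⁻¹)⁻¹ * 1 = m.2 * v⁻¹; group)

/-! ### Distributivity of tensor over disjoint union -/

theorem tensDistL (A B C : Type*) [MulAction (G × G) A] [MulAction (G × G) B]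
    [MulAction (G × G) C] :
    IsoAsGSets (G × G) (BisetTensor G G G (A ⊕ B) C)
      (BisetTensor G G G A C ⊕ BisetTensor G G G B C) := by
  refine ⟨⟨Quotient.lift (fun p : (A ⊕ B) × C =>
      Sum.elim (fun a => Sum.inl (BisetTensor.mk (a, p.2)))
        (fun b => Sum.inr (BisetTensor.mk (b, p.2))) p.1) ?_,
    Sum.elim (Quotient.lift (fun p : A × C => BisetTensor.mk (Sum.inl p.1, p.2)) ?_)
      (Quotient.lift (fun p : B × C => BisetTensor.mk (Sum.inr p.1, p.2)) ?_), ?_, ?_⟩, ?_⟩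
  · rintro ⟨x, c⟩ ⟨x', c'⟩ ⟨h, h1, h2⟩
    dsimp only at h1 h2 ⊢
    cases x with
    | inl a =>
      rw [show x' = ((1 : G), h) • Sum.inl a from h1]
      exact congrArg Sum.inl (Quotient.sound ⟨h, rfl, h2⟩)
    | inr b =>
      rw [show x' = ((1 : G), h) • Sum.inr b from h1]
      exact congrArg Sum.inr (Quotient.sound ⟨h, rfl, h2⟩)
  · rintro ⟨a, c⟩ ⟨a', c'⟩ ⟨h, h1, h2⟩
    exact Quotient.sound ⟨h, congrArg Sum.inl h1, h2⟩
  · rintro ⟨b, c⟩ ⟨b', c'⟩ ⟨h, h1, h2⟩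
    exact Quotient.sound ⟨h, congrArg Sum.inr h1, h2⟩
  · intro q
    induction q using Quotient.inductionOn with | h p => ?_
    obtain ⟨x, c⟩ := p
    cases x <;> rfl
  · rintro (q | q) <;>
      (induction q using Quotient.inductionOn with | h p => ?_) <;> rfl
  · intro m q
    induction q using Quotient.inductionOn with | h p => ?_
    obtain ⟨x, c⟩ := p
    cases x <;> rfl

theorem tensDistR (A B C : Type*) [MulAction (G × G) A] [MulAction (G × G) B]
    [MulAction (G × G) C] :
    IsoAsGSets (G × G) (BisetTensor G G G A (B ⊕ C))
      (BisetTensor G G G A B ⊕ BisetTensor G G G A C) := by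
  refine ⟨⟨Quotient.lift (fun p : A × (B ⊕ C) =>
      Sum.elim (fun b => Sum.inl (BisetTensor.mk (p.1, b)))
        (fun c => Sum.inr (BisetTensor.mk (p.1, c))) p.2) ?_,
    Sum.elim (Quotient.lift (fun p : A × B => BisetTensor.mk (p.1, Sum.inl p.2)) ?_)
      (Quotient.lift (fun p : A × C => BisetTensor.mk (p.1, Sum.inr p.2)) ?_), ?_, ?_⟩, ?_⟩
  · rintro ⟨a, y⟩ ⟨a', y'⟩ ⟨h, h1, h2⟩
    dsimp only at h1 h2 ⊢
    cases y with
    | inl b =>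
      rw [show y' = (h, (1 : G)) • Sum.inl b from h2]
      exact congrArg Sum.inl (Quotient.sound ⟨h, h1, rfl⟩)
    | inr c =>
      rw [show y' = (h, (1 : G)) • Sum.inr c from h2]
      exact congrArg Sum.inr (Quotient.sound ⟨h, h1, rfl⟩)
  · rintro ⟨a, b⟩ ⟨a', b'⟩ ⟨h, h1, h2⟩
    exact Quotient.sound ⟨h, h1, congrArg Sum.inl h2⟩
  · rintro ⟨a, c⟩ ⟨a', c'⟩ ⟨h, h1, h2⟩
    exact Quotient.sound ⟨h, h1, congrArg Sum.inr h2⟩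
  · intro q
    induction q using Quotient.inductionOn with | h p => ?_
    obtain ⟨a, y⟩ := p
    cases y <;> rfl
  · rintro (q | q) <;>
      (induction q using Quotient.inductionOn with | h p => ?_) <;> rfl
  · intro m q
    induction q using Quotient.inductionOn with | h p => ?_
    obtain ⟨a, y⟩ := p
    cases y <;> rfl

/-! ### Opposite bisets -/

theorem yt_congr {α α' : ↥H ≃* ↥H} (h : α = α') :
    IsoAsGSets (G × G) ((G × G) ⧸ twistedDiagonal H H α)
      ((G × G) ⧸ twistedDiagonal H H α') := by
  subst h
  exact iso_refl _ _

theorem op_grp : IsoAsGSets (G × G) (BisetOp G G (BisetGrp G)) (BisetGrp G) := by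
  refine ⟨⟨fun x => ⟨((x : BisetGrp G)).val⁻¹⟩,
    fun x => (⟨x.val⁻¹⟩ : BisetGrp G), ?_, ?_⟩, ?_⟩
  · rintro ⟨v⟩
    show (⟨(v⁻¹)⁻¹⟩ : BisetGrp G) = ⟨v⟩
    rw [inv_inv]
  · rintro ⟨v⟩
    show (⟨(v⁻¹)⁻¹⟩ : BisetGrp G) = ⟨v⟩
    rw [inv_inv]
  · rintro m ⟨v⟩
    show (⟨(m.2 * v * m.1⁻¹)⁻¹⟩ : BisetGrp G) = ⟨m.1 * v⁻¹ * m.2⁻¹⟩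
    exact congrArg BisetGrp.mk (by group)

theorem op_twisted (α : ↥H ≃* ↥H) :
    IsoAsGSets (G × G) (BisetOp G G ((G × G) ⧸ twistedDiagonal H H α))
      ((G × G) ⧸ twistedDiagonal H H α.symm) := by
  refine ⟨⟨Quotient.lift (fun p : G × G =>
      (QuotientGroup.mk (p.2, p.1) : (G × G) ⧸ twistedDiagonal H H α.symm)) ?_,
    Quotient.lift (fun p : G × G =>
      (QuotientGroup.mk (p.2, p.1) : (G × G) ⧸ twistedDiagonal H H α) :
        _ → BisetOp G G ((G × G) ⧸ twistedDiagonal H H α)) ?_, ?_, ?_⟩, ?_⟩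
  · intro p p' hp
    have hp' : (QuotientGroup.leftRel (twistedDiagonal H H α)) p p' := hp
    rw [leftRel_iff] at hp'
    obtain ⟨s, h1, h2⟩ := hp'
    rw [h1, h2]
    exact yeq α.symm (p.2, p.1) (p.2 * ↑s, p.1 * ↑(α s)) (α s)
      (by rw [MulEquiv.symm_apply_apply]; group) (by group)
  · intro p p' hp
    have hp' : (QuotientGroup.leftRel (twistedDiagonal H H α.symm)) p p' := hp
    rw [leftRel_iff] at hp'
    obtain ⟨s, h1, h2⟩ := hp'
    rw [h1, h2]
    exact yeq α (p.2, p.1) (p.2 * ↑s, p.1 * ↑(α.symm s)) (α.symm s)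
      (by rw [MulEquiv.apply_symm_apply]; group) (by group)
  · intro q
    induction q using Quotient.inductionOn with | h p => ?_
    rfl
  · intro q
    induction q using Quotient.inductionOn with | h p => ?_
    rfl
  · intro m q
    induction q using Quotient.inductionOn with | h p => ?_
    rfl

theorem op_sum (A B : Type*) [MulAction (G × G) A] [MulAction (G × G) B] :
    IsoAsGSets (G × G) (BisetOp G G (A ⊕ B)) (BisetOp G G A ⊕ BisetOp G G B) := by
  refine ⟨Equiv.refl _, ?_⟩
  rintro m (a | b) <;> rfl

/-! ### Expansion lemmas -/

include hmal in
theorem expandXX (α β : ↥H ≃* ↥H) :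
    IsoAsGSets (G × G)
      (BisetTensor G G G (BisetGrp G ⊕ ((G × G) ⧸ twistedDiagonal H H α))
        (BisetGrp G ⊕ ((G × G) ⧸ twistedDiagonal H H β)))
      ((BisetGrp G ⊕ ((G × G) ⧸ twistedDiagonal H H β)) ⊕
        (((G × G) ⧸ twistedDiagonal H H α) ⊕
          (((G × G) ⧸ twistedDiagonal H H (β.trans α)) ⊕ FreeB G (Qn H)))) :=
  iso_trans (tensDistL _ _ _)
    (iso_sumCongr (unit_left _)
      (iso_trans (tensDistR _ _ _)
        (iso_sumCongr (unit_right _) (tensor_iso hmal α β))))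

include hmal in
theorem expandXY (α : ↥H ≃* ↥H) :
    IsoAsGSets (G × G)
      (BisetTensor G G G (BisetGrp G ⊕ ((G × G) ⧸ twistedDiagonal H H α))
        ((G × G) ⧸ twistedDiagonal H H (MulEquiv.refl ↥H)))
      (((G × G) ⧸ twistedDiagonal H H (MulEquiv.refl ↥H)) ⊕
        ((((G × G) ⧸ twistedDiagonal H H α) ⊕ FreeB G (Qn H)))) :=
  iso_trans (tensDistL _ _ _)
    (iso_sumCongr (unit_left _)
      (iso_trans (tensor_iso hmal α (MulEquiv.refl ↥H))
        (iso_sumCongr (yt_congr (MulEquiv.ext fun _ => rfl)) (iso_refl _ _))))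

include hmal in
theorem expandYX (β : ↥H ≃* ↥H) :
    IsoAsGSets (G × G)
      (BisetTensor G G G ((G × G) ⧸ twistedDiagonal H H (MulEquiv.refl ↥H))
        (BisetGrp G ⊕ ((G × G) ⧸ twistedDiagonal H H β)))
      (((G × G) ⧸ twistedDiagonal H H (MulEquiv.refl ↥H)) ⊕
        ((((G × G) ⧸ twistedDiagonal H H β) ⊕ FreeB G (Qn H)))) :=
  iso_trans (tensDistR _ _ _)
    (iso_sumCongr (unit_right _)
      (iso_trans (tensor_iso hmal (MulEquiv.refl ↥H) β)
        (iso_sumCongr (yt_congr (MulEquiv.ext fun _ => rfl)) (iso_refl _ _))))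

include hmal in
theorem expandYY :
    IsoAsGSets (G × G)
      (BisetTensor G G G ((G × G) ⧸ twistedDiagonal H H (MulEquiv.refl ↥H))
        ((G × G) ⧸ twistedDiagonal H H (MulEquiv.refl ↥H)))
      (((G × G) ⧸ twistedDiagonal H H (MulEquiv.refl ↥H)) ⊕ FreeB G (Qn H)) :=
  iso_trans (tensor_iso hmal (MulEquiv.refl ↥H) (MulEquiv.refl ↥H))
    (iso_sumCongr (yt_congr (MulEquiv.ext fun _ => rfl)) (iso_refl _ _))

theorem opX (α : ↥H ≃* ↥H) :
    IsoAsGSets (G × G) (BisetOp G G (BisetGrp G ⊕ ((G × G) ⧸ twistedDiagonal H H α)))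
      (BisetGrp G ⊕ ((G × G) ⧸ twistedDiagonal H H α.symm)) :=
  iso_trans (op_sum _ _) (iso_sumCongr op_grp (op_twisted α))

theorem opY : IsoAsGSets (G × G)
    (BisetOp G G ((G × G) ⧸ twistedDiagonal H H (MulEquiv.refl ↥H)))
    ((G × G) ⧸ twistedDiagonal H H (MulEquiv.refl ↥H)) :=
  iso_trans (op_twisted (MulEquiv.refl ↥H)) (yt_congr (MulEquiv.ext fun _ => rfl))

end S17
end S17Aux3

theorem statement17' {G : Type*} [Group G] (H : Subgroup G)
    (hmal : ∀ g : G, g ∉ H → H ⊓ Subgroup.map (MulAut.conj g).toMonoidHom H = ⊥) :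
    (∀ α β : ↥H ≃* ↥H,
      IsoAsGSets (G × G)
        (BisetTensor G G G
            (BisetGrp G ⊕ ((G × G) ⧸ twistedDiagonal H H α))
            (BisetGrp G ⊕ ((G × G) ⧸ twistedDiagonal H H β)) ⊕
          BisetTensor G G G
            ((G × G) ⧸ twistedDiagonal H H (MulEquiv.refl ↥H))
            ((G × G) ⧸ twistedDiagonal H H (MulEquiv.refl ↥H)) ⊕
          ((G × G) ⧸ twistedDiagonal H H (MulEquiv.refl ↥H)))
        ((BisetGrp G ⊕ ((G × G) ⧸ twistedDiagonal H H (β.trans α))) ⊕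
          BisetTensor G G G
            (BisetGrp G ⊕ ((G × G) ⧸ twistedDiagonal H H α))
            ((G × G) ⧸ twistedDiagonal H H (MulEquiv.refl ↥H)) ⊕
          BisetTensor G G G
            ((G × G) ⧸ twistedDiagonal H H (MulEquiv.refl ↥H))
            (BisetGrp G ⊕ ((G × G) ⧸ twistedDiagonal H H β)))) ∧
    (∀ α : ↥H ≃* ↥H,
      IsOrthogonalPair G G
        (BisetGrp G ⊕ ((G × G) ⧸ twistedDiagonal H H α))
        ((G × G) ⧸ twistedDiagonal H H (MulEquiv.refl ↥H))) := by
  constructor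
  · intro α β
    refine S17.iso_trans (S17.iso_sumCongr (S17.expandXX hmal α β)
      (S17.iso_sumCongr (S17.expandYY hmal) (S17.iso_refl _ _))) ?_
    refine S17.iso_trans ?_ (S17.iso_symm (S17.iso_sumCongr (S17.iso_refl _ _)
      (S17.iso_sumCongr (S17.expandXY hmal α) (S17.expandYX hmal β))))
    refine ⟨⟨fun z => match z with
      | .inl (.inl (.inl a)) => .inl (.inl a)
      | .inl (.inl (.inr yb)) => .inr (.inr (.inr (.inl yb)))
      | .inl (.inr (.inl ya)) => .inr (.inl (.inr (.inl ya)))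
      | .inl (.inr (.inr (.inl yab))) => .inl (.inr yab)
      | .inl (.inr (.inr (.inr f))) => .inr (.inl (.inr (.inr f)))
      | .inr (.inl (.inl y)) => .inr (.inl (.inl y))
      | .inr (.inl (.inr f)) => .inr (.inr (.inr (.inr f)))
      | .inr (.inr y) => .inr (.inr (.inl y)),
      fun z => match z with
      | .inl (.inl a) => .inl (.inl (.inl a))
      | .inl (.inr yab) => .inl (.inr (.inr (.inl yab)))
      | .inr (.inl (.inl y)) => .inr (.inl (.inl y))
      | .inr (.inl (.inr (.inl ya))) => .inl (.inr (.inl ya))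
      | .inr (.inl (.inr (.inr f))) => .inl (.inr (.inr (.inr f)))
      | .inr (.inr (.inl y)) => .inr (.inr y)
      | .inr (.inr (.inr (.inl yb))) => .inl (.inl (.inr yb))
      | .inr (.inr (.inr (.inr f))) => .inr (.inl (.inr f)), ?_, ?_⟩, ?_⟩
    · rintro (((a|yb)|(ya|(yab|f)))|((y|f)|y)) <;> rfl
    · rintro ((a|yab)|((y|(ya|f))|(y|(yb|f)))) <;> rfl
    · rintro m (((a|yb)|(ya|(yab|f)))|((y|f)|y)) <;> rfl
  · intro α
    unfold IsOrthogonalPair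
    refine S17.iso_trans (S17.iso_sumCongr
      (S17.iso_trans (S17.iso_tensorCongr (S17.iso_refl _ _) (S17.opX α))
        (S17.iso_trans (S17.expandXX hmal α α.symm)
          (S17.iso_sumCongr (S17.iso_refl _ _)
            (S17.iso_sumCongr (S17.iso_refl _ _)
              (S17.iso_sumCongr (S17.yt_congr (MulEquiv.symm_trans_self α))
                (S17.iso_refl _ _))))))
      (S17.iso_trans (S17.iso_tensorCongr (S17.iso_refl _ _) S17.opY)
        (S17.expandYY hmal))) ?_
    refine S17.iso_trans ?_ (S17.iso_symm (S17.iso_sumCongr (S17.iso_refl _ _)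
      (S17.iso_sumCongr
        (S17.iso_trans (S17.iso_tensorCongr (S17.iso_refl _ _) S17.opY)
          (S17.expandXY hmal α))
        (S17.iso_trans (S17.iso_tensorCongr (S17.iso_refl _ _) (S17.opX α))
          (S17.expandYX hmal α.symm)))))
    refine ⟨⟨fun z => match z with
      | .inl (.inl (.inl a)) => .inl a
      | .inl (.inl (.inr yas)) => .inr (.inr (.inr (.inl yas)))
      | .inl (.inr (.inl ya)) => .inr (.inl (.inr (.inl ya)))
      | .inl (.inr (.inr (.inl y))) => .inr (.inl (.inl y))
      | .inl (.inr (.inr (.inr f))) => .inr (.inl (.inr (.inr f)))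
      | .inr (.inl y) => .inr (.inr (.inl y))
      | .inr (.inr f) => .inr (.inr (.inr (.inr f))),
      fun z => match z with
      | .inl a => .inl (.inl (.inl a))
      | .inr (.inl (.inl y)) => .inl (.inr (.inr (.inl y)))
      | .inr (.inl (.inr (.inl ya))) => .inl (.inr (.inl ya))
      | .inr (.inl (.inr (.inr f))) => .inl (.inr (.inr (.inr f)))
      | .inr (.inr (.inl y)) => .inr (.inl y)
      | .inr (.inr (.inr (.inl yas))) => .inl (.inl (.inr yas))
      | .inr (.inr (.inr (.inr f))) => .inr (.inr f), ?_, ?_⟩, ?_⟩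
    · rintro (((a|yas)|(ya|(y|f)))|(y|f)) <;> rfl
    · rintro (a|((y|(ya|f))|(y|(yas|f)))) <;> rfl
    · rintro m (((a|yas)|(ya|(y|f)))|(y|f)) <;> rfl


/-- with `H` a malnormal proper nontrivial subgroup of `G`,
`X_α := G ⊔ (G×G)/Δ(H,α,H)` and `Y := (G×G)/Δ(H)`, one has
`(X_α ×_G X_β) ⊔ (Y ×_G Y) ⊔ Y ≅ X_{αβ} ⊔ (X_α ×_G Y) ⊔ (Y ×_G X_β)`, and `(X_α, Y)` is an
orthogonal pair: this encodes the orthogonal units `γ_α = [Δ(G)] - [Δ(H)] + [Δ(H,α,H)]`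
with `γ_α ·_G γ_β = γ_{αβ}`. -/
theorem statement17 {G : Type*} [Group G] [Finite G] (H : Subgroup G)
    (hbot : H ≠ ⊥) (htop : H ≠ ⊤)
    (hmal : ∀ g : G, g ∉ H → H ⊓ Subgroup.map (MulAut.conj g).toMonoidHom H = ⊥) :
    (∀ α β : ↥H ≃* ↥H,
      IsoAsGSets (G × G)
        (BisetTensor G G G
            (BisetGrp G ⊕ ((G × G) ⧸ twistedDiagonal H H α))
            (BisetGrp G ⊕ ((G × G) ⧸ twistedDiagonal H H β)) ⊕
          BisetTensor G G G
            ((G × G) ⧸ twistedDiagonal H H (MulEquiv.refl ↥H))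
            ((G × G) ⧸ twistedDiagonal H H (MulEquiv.refl ↥H)) ⊕
          ((G × G) ⧸ twistedDiagonal H H (MulEquiv.refl ↥H)))
        ((BisetGrp G ⊕ ((G × G) ⧸ twistedDiagonal H H (β.trans α))) ⊕
          BisetTensor G G G
            (BisetGrp G ⊕ ((G × G) ⧸ twistedDiagonal H H α))
            ((G × G) ⧸ twistedDiagonal H H (MulEquiv.refl ↥H)) ⊕
          BisetTensor G G G
            ((G × G) ⧸ twistedDiagonal H H (MulEquiv.refl ↥H))
            (BisetGrp G ⊕ ((G × G) ⧸ twistedDiagonal H H β)))) ∧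
    (∀ α : ↥H ≃* ↥H,
      IsOrthogonalPair G G
        (BisetGrp G ⊕ ((G × G) ⧸ twistedDiagonal H H α))
        ((G × G) ⧸ twistedDiagonal H H (MulEquiv.refl ↥H))) := by
  exact statement17' H hmal
end

section
/- Let G be a finite group and H ≤ G a subgroup with N_G(H) = H. Then for automorphisms α, β of H, the subgroups Δ(H,α,H) and Δ(H,β,H) of G×G are (G×G)-conjugate if and only if α and β have the same image in Out(H), i.e., α∘β⁻¹ is an inner automorphism of H. (This yields the injectivity of the homomorphism Out(H) → Λ_G, α ↦ γ_α, in the Frobenius group setting.) -/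
open MulAction

/-- for `H ≤ G` with `N_G(H) = H`, the subgroups `Δ(H,α,H)` and `Δ(H,β,H)` of
`G × G` are `(G×G)`-conjugate if and only if `α ∘ β⁻¹` is an inner automorphism of `H`. -/
theorem statement18 {G : Type*} [Group G] [Finite G] (H : Subgroup G)
    (hself : Subgroup.normalizer (H : Set G) = H) (α β : ↥H ≃* ↥H) :
    (∃ p : G × G, Subgroup.map (MulAut.conj p).toMonoidHom (twistedDiagonal H H β) =
        twistedDiagonal H H α) ↔
      ∃ h₀ : ↥H, ∀ x : ↥H, α (β.symm x) = h₀ * x * h₀⁻¹ := by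
  constructor
  · rintro ⟨⟨g₁, g₂⟩, hmap⟩
    have fwd : ∀ s : ↥H, ∃ t : ↥H,
        (t : G) = g₂ * s * g₂⁻¹ ∧ (α t : G) = g₁ * β s * g₁⁻¹ := by
      intro s
      have hs : (((β s : G)), (s : G)) ∈ twistedDiagonal H H β := ⟨s, rfl⟩
      have hmem := Subgroup.mem_map_of_mem
        (MulAut.conj ((g₁, g₂) : G × G)).toMonoidHom hs
      rw [hmap] at hmem
      obtain ⟨t, ht⟩ := hmem
      refine ⟨t, ?_, ?_⟩
      · have := congrArg Prod.snd ht
        simpa [MulAut.conj, mul_assoc] using this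
      · have := congrArg Prod.fst ht
        simpa [MulAut.conj, mul_assoc] using this
    have bwd : ∀ t : ↥H, ∃ s : ↥H,
        g₂ * s * g₂⁻¹ = (t : G) ∧ g₁ * β s * g₁⁻¹ = (α t : G) := by
      intro t
      have ht : (((α t : G)), (t : G)) ∈ twistedDiagonal H H α := ⟨t, rfl⟩
      rw [← hmap] at ht
      rw [Subgroup.mem_map] at ht
      obtain ⟨y, hy, hconj⟩ := ht
      obtain ⟨s, rfl⟩ := hy
      refine ⟨s, ?_, ?_⟩
      · have := congrArg Prod.snd hconj
        simpa [MulAut.conj, mul_assoc] using this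
      · have := congrArg Prod.fst hconj
        simpa [MulAut.conj, mul_assoc] using this
    have hg₂ : g₂ ∈ H := by
      rw [← hself, Subgroup.mem_normalizer_iff]
      intro h
      constructor
      · intro hh
        obtain ⟨t, ht1, -⟩ := fwd ⟨h, hh⟩
        exact ht1 ▸ t.2
      · intro hh
        obtain ⟨s, hs1, -⟩ := bwd ⟨_, hh⟩
        have : (s : G) = h := by
          have := hs1
          field_simp at this
          simpa using this
        exact this ▸ s.2
    have hg₁ : g₁ ∈ H := by
      rw [← hself, Subgroup.mem_normalizer_iff]
      intro h
      constructor
      · intro hh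
        obtain ⟨t, -, ht2⟩ := fwd (β.symm ⟨h, hh⟩)
        rw [MulEquiv.apply_symm_apply] at ht2
        exact ht2 ▸ (α t).2
      · intro hh
        obtain ⟨s, -, hs2⟩ := bwd (α.symm ⟨_, hh⟩)
        rw [MulEquiv.apply_symm_apply] at hs2
        have : ((β s : ↥H) : G) = h := by
          have := hs2
          field_simp at this
          simpa using this
        exact this ▸ (β s).2
    set h₁ : ↥H := ⟨g₁, hg₁⟩ with hh₁
    set h₂ : ↥H := ⟨g₂, hg₂⟩ with hh₂
    have key : ∀ s : ↥H, α (h₂ * s * h₂⁻¹) = h₁ * β s * h₁⁻¹ := by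
      intro s
      obtain ⟨t, ht1, ht2⟩ := fwd s
      have htt : t = h₂ * s * h₂⁻¹ := by
        apply Subtype.ext
        push_cast
        exact ht1
      rw [← htt]
      apply Subtype.ext
      push_cast
      exact ht2
    refine ⟨h₁ * (β h₂)⁻¹, fun x => ?_⟩
    have hsx : β.symm x = h₂ * (h₂⁻¹ * β.symm x * h₂) * h₂⁻¹ := by group
    rw [hsx, key, map_mul, map_mul, map_inv, MulEquiv.apply_symm_apply]
    group
  · rintro ⟨h₀, hh₀⟩
    have hkey : ∀ s : ↥H, ((α s : ↥H) : G) = h₀ * β s * (h₀ : G)⁻¹ := by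
      intro s
      have := hh₀ (β s)
      rw [MulEquiv.symm_apply_apply] at this
      have := congrArg (Subtype.val) this
      push_cast at this
      simpa using this
    refine ⟨((h₀ : G), 1), ?_⟩
    ext x
    rw [Subgroup.mem_map]
    constructor
    · rintro ⟨y, ⟨s, rfl⟩, rfl⟩
      refine ⟨s, ?_⟩
      have h2 : (1 : G) * (s : G) * (1 : G)⁻¹ = s := by group
      refine Prod.ext ?_ ?_
      · simpa [MulAut.conj, mul_assoc] using (hkey s)
      · simp [MulAut.conj]
    · rintro ⟨t, rfl⟩
      refine ⟨((((β t : ↥H) : G)), ((t : ↥H) : G)), ⟨t, rfl⟩, ?_⟩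
      refine Prod.ext ?_ ?_
      · simpa [MulAut.conj, mul_assoc] using (hkey t).symm
      · simp [MulAut.conj]
end

section
/- Let G be a finite group and let X, Y, Z, W be finite left G-sets such that (X×Z) ⊔ (Y×W) ≅ pt ⊔ (X×W) ⊔ (Y×Z) as G-sets (products with diagonal G-action, pt a one-point G-set); i.e., ([X] − [Y])·([Z] − [W]) = 1 in the Burnside ring B(G), so that u = [X] − [Y] is a unit of B(G). Then (X×X) ⊔ (Y×Y) ≅ pt ⊔ (X×Y) ⊔ (Y×X) as G-sets; i.e., u² = 1. (Hence the unit group B(G)^× is an elementary abelian 2-group.) -/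
open MulAction

open MulAction

section S19Aux

variable {G : Type*} [Group G]

/-- Fixed points of a subgroup. -/
abbrev FixPts (G : Type*) [Group G] (H : Subgroup G) (A : Type*) [MulAction G A] : Type _ :=
  {a : A // ∀ g ∈ H, g • a = a}

/-- An equivariant equiv restricts to fixed points. -/
def fixPtsCongr {A B : Type*} [MulAction G A] [MulAction G B] (e : A ≃ B)
    (he : ∀ (g : G) (x : A), e (g • x) = g • e x) (H : Subgroup G) :
    FixPts G H A ≃ FixPts G H B :=
  e.subtypeEquiv fun a => by
    constructor
    · intro ha g hg
      rw [← he, ha g hg]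
    · intro ha g hg
      apply e.injective
      rw [he, ha g hg]

def fixPtsSum {A B : Type*} [MulAction G A] [MulAction G B] (H : Subgroup G) :
    FixPts G H (A ⊕ B) ≃ (FixPts G H A ⊕ FixPts G H B) where
  toFun := fun ⟨s, hs⟩ => match s, hs with
    | Sum.inl x, hx => Sum.inl ⟨x, fun g hg => by simpa using hx g hg⟩
    | Sum.inr y, hy => Sum.inr ⟨y, fun g hg => by simpa using hy g hg⟩
  invFun := fun s => match s with
    | Sum.inl ⟨x, hx⟩ => ⟨Sum.inl x, fun g hg => by simp [hx g hg]⟩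
    | Sum.inr ⟨y, hy⟩ => ⟨Sum.inr y, fun g hg => by simp [hy g hg]⟩
  left_inv := fun ⟨s, hs⟩ => by cases s <;> rfl
  right_inv := fun s => by rcases s with ⟨x, hx⟩ | ⟨y, hy⟩ <;> rfl

def fixPtsProd {A B : Type*} [MulAction G A] [MulAction G B] (H : Subgroup G) :
    FixPts G H (A × B) ≃ (FixPts G H A × FixPts G H B) where
  toFun := fun ⟨p, hp⟩ =>
    (⟨p.1, fun g hg => congrArg Prod.fst (hp g hg)⟩,
     ⟨p.2, fun g hg => congrArg Prod.snd (hp g hg)⟩)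
  invFun := fun p => ⟨(p.1.1, p.2.1), fun g hg => Prod.ext (p.1.2 g hg) (p.2.2 g hg)⟩
  left_inv := fun ⟨p, hp⟩ => rfl
  right_inv := fun p => rfl

instance fixPtsPUnitUnique (H : Subgroup G) : Unique (FixPts G H PUnit) where
  default := ⟨PUnit.unit, fun _ _ => rfl⟩
  uniq := fun x => Subtype.ext (Subsingleton.elim _ _)

end S19Aux

open MulAction

section S19Orbit

variable {G : Type*} [Group G]

/-- The complement of an orbit, as a `SubMulAction`. -/
def orbitCompl (G : Type*) [Group G] {A : Type*} [MulAction G A] (a : A) : SubMulAction G A where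
  carrier := (orbit G a)ᶜ
  smul_mem' := by
    intro g x hx hmem
    apply hx
    obtain ⟨k, hk⟩ := hmem
    exact ⟨g⁻¹ * k, by simp only [mul_smul]; rw [show k • a = g • x from hk, inv_smul_smul]⟩

theorem mem_orbitCompl {A : Type*} [MulAction G A] {a x : A} :
    x ∈ orbitCompl G a ↔ x ∉ orbit G a := Iff.rfl

/-- Fixed points of the complement submulaction. -/
def fixPtsSubMulAction {A : Type*} [MulAction G A] (p : SubMulAction G A) (H : Subgroup G) :
    {z : p // ∀ g ∈ H, g • z = z} ≃ {x : A // (∀ g ∈ H, g • x = x) ∧ x ∈ p} where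
  toFun z := ⟨z.1.1, fun g hg => congrArg Subtype.val (z.2 g hg), z.1.2⟩
  invFun w := ⟨⟨w.1, w.2.2⟩, fun g hg => Subtype.ext (w.2.1 g hg)⟩
  left_inv z := rfl
  right_inv w := rfl

/-- Equivariant equivalence between orbits of points with equal stabilizers. -/
noncomputable def orbitEquivOfStabEq {A B : Type*} [MulAction G A] [MulAction G B] (a : A) (b : B)
    (h : stabilizer G a = stabilizer G b) : orbit G a ≃ orbit G b :=
  (orbitEquivQuotientStabilizer G a).trans
    ((Subgroup.quotientEquivOfEq h).trans (orbitEquivQuotientStabilizer G b).symm)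

theorem orbitEquivOfStabEq_apply {A B : Type*} [MulAction G A] [MulAction G B] (a : A) (b : B)
    (h : stabilizer G a = stabilizer G b) (g : G) (hm : g • a ∈ orbit G a) :
    (orbitEquivOfStabEq a b h ⟨g • a, hm⟩ : B) = g • b := by
  have h1 : (orbitEquivQuotientStabilizer G a).symm ((g : G ⧸ stabilizer G a)) = ⟨g • a, hm⟩ :=
    Subtype.ext (orbitEquivQuotientStabilizer_symm_apply G a g)
  have h2 : orbitEquivQuotientStabilizer G a ⟨g • a, hm⟩ = (g : G ⧸ stabilizer G a) := by
    rw [← h1, Equiv.apply_symm_apply]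
  simp only [orbitEquivOfStabEq, Equiv.trans_apply, h2, Subgroup.quotientEquivOfEq_mk]
  exact orbitEquivQuotientStabilizer_symm_apply G b g

theorem orbitEquivOfStabEq_smul {A B : Type*} [MulAction G A] [MulAction G B] (a : A) (b : B)
    (h : stabilizer G a = stabilizer G b) (g : G) (x : orbit G a) (hm : g • (x : A) ∈ orbit G a) :
    (orbitEquivOfStabEq a b h ⟨g • (x : A), hm⟩ : B) = g • (orbitEquivOfStabEq a b h x : B) := by
  obtain ⟨k, hk⟩ := x.2
  have hx : x = ⟨k • a, mem_orbit a k⟩ := Subtype.ext hk.symm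
  subst hx
  rw [orbitEquivOfStabEq_apply a b h k (mem_orbit a k)]
  have : g • (k • a) = (g * k) • a := (mul_smul g k a).symm
  have h3 : (⟨g • k • a, hm⟩ : orbit G a) = ⟨(g * k) • a, by rw [← this]; exact hm⟩ :=
    Subtype.ext this
  rw [h3, orbitEquivOfStabEq_apply a b h (g * k) _, mul_smul]

end S19Orbit

open MulAction

universe u v w

section S19Split

theorem card_subtype_split {A : Type*} [Finite A] (P Q : A → Prop) :
    Nat.card {a // P a} =
      Nat.card {a // P a ∧ Q a} + Nat.card {a // P a ∧ ¬ Q a} := by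
  classical
  rw [← Nat.card_sum]
  exact Nat.card_congr ((Equiv.sumCompl (fun x : {a // P a} => Q x.val)).symm.trans
    (Equiv.sumCongr (Equiv.subtypeSubtypeEquivSubtypeInter P Q)
      (Equiv.subtypeSubtypeEquivSubtypeInter P (fun a => ¬ Q a))))

theorem subgroup_eq_of_le_of_card_le {G : Type*} [Group G] [Finite G] {H K : Subgroup G}
    (h : H ≤ K) (hc : Nat.card K ≤ Nat.card H) : H = K := by
  apply SetLike.coe_injective
  apply Set.eq_of_subset_of_ncard_le h ?_ (Set.toFinite _)
  rw [← Nat.card_coe_set_eq, ← Nat.card_coe_set_eq]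
  exact hc

end S19Split

section S19Orbit2

variable {G : Type*} [Group G]

theorem smul_mem_orbit' {A : Type*} [MulAction G A] {a x : A} (g : G)
    (hx : x ∈ orbit G a) : g • x ∈ orbit G a := by
  obtain ⟨k, hk⟩ := hx
  refine ⟨g * k, ?_⟩
  show (g * k) • a = g • x
  rw [mul_smul]
  exact congrArg _ hk

theorem not_smul_mem_orbit' {A : Type*} [MulAction G A] {a x : A} (g : G)
    (hx : x ∉ orbit G a) : g • x ∉ orbit G a := fun hmem => by
  exact hx (by simpa using smul_mem_orbit' g⁻¹ hmem)

theorem orbitEquivOfStabEq_symm_smul {A B : Type*} [MulAction G A] [MulAction G B] (a : A) (b : B)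
    (h : stabilizer G a = stabilizer G b) (g : G) (y : orbit G b) (hm : g • (y : B) ∈ orbit G b) :
    ((orbitEquivOfStabEq a b h).symm ⟨g • (y : B), hm⟩ : A) =
      g • ((orbitEquivOfStabEq a b h).symm y : A) := by
  set φ := orbitEquivOfStabEq a b h with hφ
  set x := φ.symm y with hx
  have hxy : φ x = y := by rw [hx, Equiv.apply_symm_apply]
  have hmem : g • (x : A) ∈ orbit G a := smul_mem_orbit' g x.2
  have key : (φ ⟨g • (x : A), hmem⟩ : B) = g • (y : B) := by
    rw [orbitEquivOfStabEq_smul a b h g x hmem, hxy]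
  have : φ ⟨g • (x : A), hmem⟩ = ⟨g • (y : B), hm⟩ := Subtype.ext key
  have := congrArg φ.symm this
  rw [Equiv.symm_apply_apply] at this
  rw [← this]

/-- The fixed-point sets of corresponding orbits are in bijection. -/
noncomputable def fixOrbitEquiv {A B : Type*} [MulAction G A] [MulAction G B] (a : A) (b : B)
    (h : stabilizer G a = stabilizer G b) (H : Subgroup G) :
    {x : A // (∀ g ∈ H, g • x = x) ∧ x ∈ orbit G a} ≃
      {y : B // (∀ g ∈ H, g • y = y) ∧ y ∈ orbit G b} where
  toFun x := ⟨(orbitEquivOfStabEq a b h ⟨x.1, x.2.2⟩ : B), by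
      intro g hg
      have := orbitEquivOfStabEq_smul a b h g ⟨x.1, x.2.2⟩
        (smul_mem_orbit' g x.2.2)
      rw [← this]
      exact congrArg (fun z => (orbitEquivOfStabEq a b h z : B)) (Subtype.ext (x.2.1 g hg)),
    (orbitEquivOfStabEq a b h ⟨x.1, x.2.2⟩).2⟩
  invFun y := ⟨((orbitEquivOfStabEq a b h).symm ⟨y.1, y.2.2⟩ : A), by
      intro g hg
      have := orbitEquivOfStabEq_symm_smul a b h g ⟨y.1, y.2.2⟩
        (smul_mem_orbit' g y.2.2)
      rw [← this]
      exact congrArg (fun z => ((orbitEquivOfStabEq a b h).symm z : A)) (Subtype.ext (y.2.1 g hg)),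
    ((orbitEquivOfStabEq a b h).symm ⟨y.1, y.2.2⟩).2⟩
  left_inv x := by
    apply Subtype.ext
    show (((orbitEquivOfStabEq a b h).symm ⟨_, _⟩ : orbit G a) : A) = x.1
    rw [Subtype.coe_eta, Equiv.symm_apply_apply]
  right_inv y := by
    apply Subtype.ext
    show ((orbitEquivOfStabEq a b h ⟨_, _⟩ : orbit G b) : B) = y.1
    rw [Subtype.coe_eta, Equiv.apply_symm_apply]

end S19Orbit2

section S19Main

theorem fix_bot_card {G : Type u} [Group G] (A : Type v) [MulAction G A] :
    Nat.card (FixPts G ⊥ A) = Nat.card A :=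
  Nat.card_congr (Equiv.subtypeUnivEquiv (fun a g hg => by
    obtain rfl := Subgroup.mem_bot.mp hg
    exact one_smul _ _))

theorem marks_empty {G : Type u} [Group G] (A : Type v) (B : Type w)
    [MulAction G A] [MulAction G B] [Finite A] [Finite B] (hA : IsEmpty A)
    (hmarks : ∀ H : Subgroup G, Nat.card (FixPts G H A) = Nat.card (FixPts G H B)) :
    ∃ e : A ≃ B, ∀ (g : G) (x : A), e (g • x) = g • e x := by
  have hB0 : Nat.card B = 0 := by
    rw [← fix_bot_card (G := G) B, ← hmarks ⊥, fix_bot_card, Nat.card_of_isEmpty]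
  have : IsEmpty B := by
    rcases Nat.card_eq_zero.mp hB0 with h | h
    · exact h
    · exact absurd h (not_infinite_iff_finite.mpr inferInstance)
  exact ⟨Equiv.equivOfIsEmpty A B, fun g x => (hA.false x).elim⟩

theorem marks_equiv_aux (n : ℕ) : ∀ {G : Type u} [Group G] [Finite G]
    (A : Type v) (B : Type w) [MulAction G A] [MulAction G B] [Finite A] [Finite B],
    Nat.card A ≤ n →
    (∀ H : Subgroup G, Nat.card (FixPts G H A) = Nat.card (FixPts G H B)) →
    ∃ e : A ≃ B, ∀ (g : G) (x : A), e (g • x) = g • e x := by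
  induction n with
  | zero =>
    intro G _ _ A B _ _ _ _ hcard hmarks
    have : IsEmpty A := by
      rcases Nat.card_eq_zero.mp (Nat.le_zero.mp hcard) with h | h
      · exact h
      · exact absurd h (not_infinite_iff_finite.mpr inferInstance)
    exact marks_empty A B this hmarks
  | succ n ih =>
    intro G _ _ A B _ _ _ _ hcard hmarks
    classical
    rcases isEmpty_or_nonempty A with hA | hA
    · exact marks_empty A B hA hmarks
    · obtain ⟨a₀⟩ := hA
      -- choose a subgroup of maximal cardinality having a fixed point in A
      have hne : Nonempty {H : Subgroup G // Nonempty (FixPts G H A)} :=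
        ⟨⟨⊥, ⟨a₀, fun g hg => by
          obtain rfl := Subgroup.mem_bot.mp hg; exact one_smul _ _⟩⟩⟩
      obtain ⟨⟨H₀, hH₀⟩, hmax⟩ :=
        Finite.exists_max (fun H : {H : Subgroup G // Nonempty (FixPts G H A)} =>
          Nat.card H.1)
      obtain ⟨a⟩ := hH₀
      -- the stabilizer of a is H₀
      have hsubA : H₀ ≤ stabilizer G (a : A) := fun g hg => mem_stabilizer_iff.mpr (a.2 g hg)
      have hsA : stabilizer G (a : A) = H₀ := by
        refine (subgroup_eq_of_le_of_card_le hsubA ?_).symm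
        exact hmax ⟨stabilizer G (a : A), ⟨⟨a.1, fun g hg => mem_stabilizer_iff.mp hg⟩⟩⟩
      -- B has an H₀-fixed point b with stabilizer H₀
      have hBfix : Nonempty (FixPts G H₀ B) := by
        have hApos : 0 < Nat.card (FixPts G H₀ A) := @Nat.card_pos _ ⟨a⟩ _
        have : 0 < Nat.card (FixPts G H₀ B) := by rw [← hmarks H₀]; exact hApos
        exact (Nat.card_pos_iff.mp this).1
      obtain ⟨b⟩ := hBfix
      have hsubB : H₀ ≤ stabilizer G (b : B) := fun g hg => mem_stabilizer_iff.mpr (b.2 g hg)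
      have hsB : stabilizer G (b : B) = H₀ := by
        refine (subgroup_eq_of_le_of_card_le hsubB ?_).symm
        refine hmax ⟨stabilizer G (b : B), ?_⟩
        have : 0 < Nat.card (FixPts G (stabilizer G (b : B)) A) := by
          rw [hmarks]
          exact @Nat.card_pos _ ⟨⟨b.1, fun g hg => mem_stabilizer_iff.mp hg⟩⟩ _
        exact (Nat.card_pos_iff.mp this).1
      have hst : stabilizer G (a : A) = stabilizer G (b : B) := hsA.trans hsB.symm
      set φ := orbitEquivOfStabEq (a : A) (b : B) hst with hφdef
      -- marks of the orbit complements agree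
      have hcomplmarks : ∀ H : Subgroup G,
          Nat.card (FixPts G H (orbitCompl G (a : A))) =
            Nat.card (FixPts G H (orbitCompl G (b : B))) := by
        intro H
        have splitA := card_subtype_split (fun x : A => ∀ g ∈ H, g • x = x)
          (fun x => x ∈ orbit G (a : A))
        have splitB := card_subtype_split (fun y : B => ∀ g ∈ H, g • y = y)
          (fun y => y ∈ orbit G (b : B))
        have horb : Nat.card {x : A // (∀ g ∈ H, g • x = x) ∧ x ∈ orbit G (a : A)} =
            Nat.card {y : B // (∀ g ∈ H, g • y = y) ∧ y ∈ orbit G (b : B)} :=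
          Nat.card_congr (fixOrbitEquiv (a : A) (b : B) hst H)
        have hCA : Nat.card (FixPts G H (orbitCompl G (a : A))) =
            Nat.card {x : A // (∀ g ∈ H, g • x = x) ∧ ¬ x ∈ orbit G (a : A)} :=
          Nat.card_congr ((fixPtsSubMulAction (orbitCompl G (a : A)) H).trans
            (Equiv.subtypeEquivRight fun x => and_congr_right fun _ => mem_orbitCompl))
        have hCB : Nat.card (FixPts G H (orbitCompl G (b : B))) =
            Nat.card {y : B // (∀ g ∈ H, g • y = y) ∧ ¬ y ∈ orbit G (b : B)} :=
          Nat.card_congr ((fixPtsSubMulAction (orbitCompl G (b : B)) H).trans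
            (Equiv.subtypeEquivRight fun y => and_congr_right fun _ => mem_orbitCompl))
        have hm := hmarks H
        have splitA' : Nat.card (FixPts G H A) =
            Nat.card {x : A // (∀ g ∈ H, g • x = x) ∧ x ∈ orbit G (a : A)} +
            Nat.card {x : A // (∀ g ∈ H, g • x = x) ∧ ¬ x ∈ orbit G (a : A)} := splitA
        have splitB' : Nat.card (FixPts G H B) =
            Nat.card {y : B // (∀ g ∈ H, g • y = y) ∧ y ∈ orbit G (b : B)} +
            Nat.card {y : B // (∀ g ∈ H, g • y = y) ∧ ¬ y ∈ orbit G (b : B)} := splitB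
        rw [hCA, hCB]
        omega
      -- the complement is smaller
      have hsize : Nat.card (orbitCompl G (a : A)) ≤ n := by
        have hsplit : Nat.card A = Nat.card {x : A // x ∈ orbit G (a : A)} +
            Nat.card {x : A // ¬ x ∈ orbit G (a : A)} := by
          rw [← Nat.card_sum]
          exact Nat.card_congr (Equiv.sumCompl (fun x : A => x ∈ orbit G (a : A))).symm
        have hpos : 0 < Nat.card {x : A // x ∈ orbit G (a : A)} :=
          @Nat.card_pos _ ⟨⟨a.1, mem_orbit_self _⟩⟩ _
        have hCeq : Nat.card (orbitCompl G (a : A)) =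
            Nat.card {x : A // ¬ x ∈ orbit G (a : A)} :=
          Nat.card_congr (Equiv.subtypeEquivRight fun x => mem_orbitCompl)
        omega
      obtain ⟨e', he'⟩ := ih (orbitCompl G (a : A)) (orbitCompl G (b : B)) hsize hcomplmarks
      -- glue the orbit equivalence and the complement equivalence
      refine ⟨⟨fun x => if h : x ∈ orbit G (a : A) then (φ ⟨x, h⟩ : B)
          else (e' ⟨x, mem_orbitCompl.mpr h⟩ : B),
        fun y => if h : y ∈ orbit G (b : B) then (φ.symm ⟨y, h⟩ : A)
          else (e'.symm ⟨y, mem_orbitCompl.mpr h⟩ : A), ?_, ?_⟩, ?_⟩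
      · intro x
        by_cases h : x ∈ orbit G (a : A)
        · have h2 : (φ ⟨x, h⟩ : B) ∈ orbit G (b : B) := (φ ⟨x, h⟩).2
          simp only [dif_pos h, dif_pos h2, Subtype.coe_eta, Equiv.symm_apply_apply]
        · have h2 : ¬ (e' ⟨x, mem_orbitCompl.mpr h⟩ : B) ∈ orbit G (b : B) :=
            mem_orbitCompl.mp (e' ⟨x, mem_orbitCompl.mpr h⟩).2
          simp only [dif_neg h, dif_neg h2, Subtype.coe_eta, Equiv.symm_apply_apply]
      · intro y
        by_cases h : y ∈ orbit G (b : B)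
        · have h2 : (φ.symm ⟨y, h⟩ : A) ∈ orbit G (a : A) := (φ.symm ⟨y, h⟩).2
          simp only [dif_pos h, dif_pos h2, Subtype.coe_eta, Equiv.apply_symm_apply]
        · have h2 : ¬ (e'.symm ⟨y, mem_orbitCompl.mpr h⟩ : A) ∈ orbit G (a : A) :=
            mem_orbitCompl.mp (e'.symm ⟨y, mem_orbitCompl.mpr h⟩).2
          simp only [dif_neg h, dif_neg h2, Subtype.coe_eta, Equiv.apply_symm_apply]
      · intro g x
        by_cases h : x ∈ orbit G (a : A)
        · have hg : g • x ∈ orbit G (a : A) := smul_mem_orbit' g h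
          simp only [Equiv.coe_fn_mk, dif_pos h, dif_pos hg]
          exact orbitEquivOfStabEq_smul (a : A) (b : B) hst g ⟨x, h⟩ hg
        · have hg : ¬ g • x ∈ orbit G (a : A) := not_smul_mem_orbit' g h
          simp only [Equiv.coe_fn_mk, dif_neg h, dif_neg hg]
          have h3 : (⟨g • x, mem_orbitCompl.mpr hg⟩ : orbitCompl G (a : A)) =
              g • (⟨x, mem_orbitCompl.mpr h⟩ : orbitCompl G (a : A)) :=
            Subtype.ext rfl
          rw [h3, he']
          exact SubMulAction.val_smul _ _

end S19Main

section S19Final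

theorem s19_key_nat (x y z w : ℕ) (h : x * z + y * w = 1 + (x * w + y * z)) :
    x * x + y * y = 1 + (x * y + y * x) := by
  have hc : (x : ℤ) * z + y * w = 1 + ((x : ℤ) * w + y * z) := by exact_mod_cast h
  have h2 : ((x : ℤ) - y) * ((z : ℤ) - w) = 1 := by linear_combination hc
  have h3 : ((x : ℤ) - y) * ((x : ℤ) - y) = 1 := by
    rcases Int.eq_one_or_neg_one_of_mul_eq_one' h2 with ⟨h4, _⟩ | ⟨h4, _⟩ <;>
      rw [h4] <;> norm_num
  have h5 : (x : ℤ) * x + y * y = 1 + ((x : ℤ) * y + y * x) := by linear_combination h3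
  exact_mod_cast h5

theorem statement19' {G : Type*} [Group G] [Finite G]
    (X Y Z W : Type*) [MulAction G X] [MulAction G Y] [MulAction G Z] [MulAction G W]
    [Finite X] [Finite Y] [Finite Z] [Finite W]
    (h : ∃ e : ((X × Z) ⊕ (Y × W)) ≃ (PUnit ⊕ ((X × W) ⊕ (Y × Z))),
      ∀ (m : G) (x : _), e (m • x) = m • e x) :
    ∃ e : ((X × X) ⊕ (Y × Y)) ≃ (PUnit ⊕ ((X × Y) ⊕ (Y × X))),
      ∀ (m : G) (x : _), e (m • x) = m • e x := by
  obtain ⟨e, he⟩ := h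
  have key : ∀ H : Subgroup G,
      Nat.card (FixPts G H ((X × X) ⊕ (Y × Y))) =
        Nat.card (FixPts G H (PUnit ⊕ ((X × Y) ⊕ (Y × X)))) := by
    intro H
    have hmark := Nat.card_congr (fixPtsCongr e he H)
    rw [Nat.card_congr (fixPtsSum (A := X × Z) (B := Y × W) H), Nat.card_sum,
      Nat.card_congr (fixPtsProd (A := X) (B := Z) H), Nat.card_prod,
      Nat.card_congr (fixPtsProd (A := Y) (B := W) H), Nat.card_prod,
      Nat.card_congr (fixPtsSum (A := PUnit) (B := (X × W) ⊕ (Y × Z)) H), Nat.card_sum,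
      Nat.card_unique (α := FixPts G H PUnit),
      Nat.card_congr (fixPtsSum (A := X × W) (B := Y × Z) H), Nat.card_sum,
      Nat.card_congr (fixPtsProd (A := X) (B := W) H), Nat.card_prod,
      Nat.card_congr (fixPtsProd (A := Y) (B := Z) H), Nat.card_prod] at hmark
    rw [Nat.card_congr (fixPtsSum (A := X × X) (B := Y × Y) H), Nat.card_sum,
      Nat.card_congr (fixPtsProd (A := X) (B := X) H), Nat.card_prod,
      Nat.card_congr (fixPtsProd (A := Y) (B := Y) H), Nat.card_prod,
      Nat.card_congr (fixPtsSum (A := PUnit) (B := (X × Y) ⊕ (Y × X)) H), Nat.card_sum,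
      Nat.card_unique (α := FixPts G H PUnit),
      Nat.card_congr (fixPtsSum (A := X × Y) (B := Y × X) H), Nat.card_sum,
      Nat.card_congr (fixPtsProd (A := X) (B := Y) H), Nat.card_prod,
      Nat.card_congr (fixPtsProd (A := Y) (B := X) H), Nat.card_prod]
    exact s19_key_nat _ _ _ _ hmark
  exact marks_equiv_aux (Nat.card ((X × X) ⊕ (Y × Y))) _ _ le_rfl key

end S19Final


/-- if `u = [X] - [Y]` is a unit of the Burnside ring `B(G)`, with inverse
`[Z] - [W]`, then `u² = 1`; expressed via `G`-set isomorphisms. Hence `B(G)^×` is an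
elementary abelian `2`-group. -/
theorem statement19 {G : Type*} [Group G] [Finite G]
    (X Y Z W : Type*) [MulAction G X] [MulAction G Y] [MulAction G Z] [MulAction G W]
    [Finite X] [Finite Y] [Finite Z] [Finite W]
    (h : IsoAsGSets G ((X × Z) ⊕ (Y × W)) (PUnit ⊕ ((X × W) ⊕ (Y × Z)))) :
    IsoAsGSets G ((X × X) ⊕ (Y × Y)) (PUnit ⊕ ((X × Y) ⊕ (Y × X))) := by
  exact statement19' X Y Z W h
end
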